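/- arXiv:1501.06423 — 4 statements merged into one kernel-verified Lean document; each statement's English description precedes it below -/
import Mathlib

section
/- Let k₁,k₂>0, K≥2, J(z)=k₁/z¹²−k₂/z⁶ for z>0 and +∞ for z≤0, and let γ:=(2k₁/k₂)^{1/6}·((Σ_{j=1}^K j^{-12})/(Σ_{j=1}^K j^{-6}))^{1/6}. Define c_j:=−j·J'(jγ)/J'(γ) for j=2,…,K. Then J'(γ)<0, c_j>0 for every j=2,…,K, and Σ_{j=2}^K c_j=1. -/
open Filter Finset Set

noncomputable section

/-- The classical Lennard-Jones potential on `(0,∞)` (real-valued formula). -/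
def LJr (k₁ k₂ : ℝ) (z : ℝ) : ℝ := k₁ / z ^ 12 - k₂ / z ^ 6

/-- The unique minimizer `γ` of the Cauchy–Born energy density `J_CB(z)=Σ_{j=1}^K J(jz)`. -/
def gammaLJ (k₁ k₂ : ℝ) (K : ℕ) : ℝ :=
  (2 * k₁ / k₂) ^ ((1 : ℝ) / 6) *
    ((∑ j ∈ Finset.Icc 1 K, 1 / (j : ℝ) ^ 12) /
      (∑ j ∈ Finset.Icc 1 K, 1 / (j : ℝ) ^ 6)) ^ ((1 : ℝ) / 6)

/-- The splitting coefficients `c_j := -j·J'(jγ)/J'(γ)`, `j = 2,…,K`. -/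
def cLJ (k₁ k₂ : ℝ) (K : ℕ) (j : ℕ) : ℝ :=
  -((j : ℝ) * deriv (LJr k₁ k₂) ((j : ℝ) * gammaLJ k₁ k₂ K)) /
    deriv (LJr k₁ k₂) (gammaLJ k₁ k₂ K)

lemma LJr_deriv (k₁ k₂ : ℝ) {z : ℝ} (hz : 0 < z) :
    deriv (LJr k₁ k₂) z = 6 * (k₂ * z ^ 6 - 2 * k₁) / z ^ 13 := by
  have h1 := (hasDerivAt_const z k₁).div (hasDerivAt_pow 12 z) (pow_ne_zero 12 hz.ne')
  have h2 := (hasDerivAt_const z k₂).div (hasDerivAt_pow 6 z) (pow_ne_zero 6 hz.ne')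
  have h := (h1.sub h2).deriv
  rw [show (((fun x : ℝ => k₁) / fun x : ℝ => x ^ 12) - (fun x : ℝ => k₂) / fun x : ℝ => x ^ 6) = LJr k₁ k₂ from rfl] at h
  rw [h]
  field_simp
  ring

lemma tail_le : ∀ K : ℕ, 1 ≤ K → ∑ j ∈ Finset.Icc 2 K, (1:ℝ) / (j:ℝ) ^ 6 ≤ 1 - 1 / K := by
  intro K
  induction K with
  | zero => omega
  | succ n ih =>
    intro _
    rcases Nat.eq_zero_or_pos n with hn | hn
    · subst hn; simp
    · rw [Finset.sum_Icc_succ_top (by omega : 2 ≤ n + 1)]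
      have hn1 : (1:ℝ) ≤ (n:ℝ) := by exact_mod_cast hn
      have hpos : (0:ℝ) < (n:ℝ) + 1 := by linarith
      have hsq : ((n:ℝ)+1)^2 ≤ ((n:ℝ)+1)^6 := pow_le_pow_right₀ (by linarith) (by norm_num)
      have hkey : (1:ℝ) / ((n:ℝ) + 1) ^ 6 ≤ 1 / (n:ℝ) - 1 / ((n:ℝ) + 1) := by
        have h1 : (1:ℝ) / ((n:ℝ)+1)^6 ≤ 1 / ((n:ℝ) * ((n:ℝ)+1)) := by
          apply one_div_le_one_div_of_le (by nlinarith)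
          nlinarith
        have h2 : (1:ℝ) / ((n:ℝ) * ((n:ℝ)+1)) = 1 / (n:ℝ) - 1 / ((n:ℝ)+1) := by
          field_simp
          ring
        linarith
      have := ih hn
      push_cast
      push_cast at this
      linarith

/-- `J'(γ) < 0`, the splitting coefficients `c_j = -jJ'(jγ)/J'(γ)` are
positive for `j = 2,…,K`, and they sum to `1`. -/
theorem splitting_coefficients (k₁ k₂ : ℝ) (hk₁ : 0 < k₁) (hk₂ : 0 < k₂)
    (K : ℕ) (hK : 2 ≤ K) :
    deriv (LJr k₁ k₂) (gammaLJ k₁ k₂ K) < 0 ∧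
    (∀ j ∈ Finset.Icc 2 K, 0 < cLJ k₁ k₂ K j) ∧
    ∑ j ∈ Finset.Icc 2 K, cLJ k₁ k₂ K j = 1 := by
  set S12 := ∑ j ∈ Finset.Icc 1 K, 1 / (j : ℝ) ^ 12 with hS12def
  set S6 := ∑ j ∈ Finset.Icc 1 K, 1 / (j : ℝ) ^ 6 with hS6def
  set γ := gammaLJ k₁ k₂ K with hγdef
  have h1K : (1 : ℕ) ∈ Finset.Icc 1 K := Finset.mem_Icc.mpr ⟨le_refl 1, by omega⟩
  have h2K : (2 : ℕ) ∈ Finset.Icc 1 K := Finset.mem_Icc.mpr ⟨by omega, hK⟩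
  -- positivity of the sums
  have hS12pos : 0 < S12 := Finset.sum_pos (fun j hj => by
    have : 1 ≤ j := (Finset.mem_Icc.mp hj).1
    have : (0:ℝ) < (j:ℝ) := by exact_mod_cast Nat.lt_of_lt_of_le Nat.zero_lt_one this
    positivity) ⟨1, h1K⟩
  have hS6pos : 0 < S6 := Finset.sum_pos (fun j hj => by
    have : 1 ≤ j := (Finset.mem_Icc.mp hj).1
    have : (0:ℝ) < (j:ℝ) := by exact_mod_cast Nat.lt_of_lt_of_le Nat.zero_lt_one this
    positivity) ⟨1, h1K⟩
  have hS12ge1 : (1:ℝ) ≤ S12 := by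
    refine le_trans (by norm_num) (Finset.single_le_sum (f := fun j : ℕ => 1 / (j:ℝ)^12)
      (fun j hj => by
        have : 1 ≤ j := (Finset.mem_Icc.mp hj).1
        have : (0:ℝ) < (j:ℝ) := by exact_mod_cast Nat.lt_of_lt_of_le Nat.zero_lt_one this
        positivity) h1K)
  have hS12ltS6 : S12 < S6 := by
    apply Finset.sum_lt_sum
    · intro j hj
      have hj1 : 1 ≤ j := (Finset.mem_Icc.mp hj).1
      have hjR : (1:ℝ) ≤ (j:ℝ) := by exact_mod_cast hj1
      apply one_div_le_one_div_of_le (by positivity)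
      calc (j:ℝ)^6 = (j:ℝ)^6 * 1 := by ring
        _ ≤ (j:ℝ)^6 * (j:ℝ)^6 := by
            have h6 : (1:ℝ) ≤ (j:ℝ)^6 := one_le_pow₀ hjR
            nlinarith
        _ = (j:ℝ)^12 := by ring
    · exact ⟨2, h2K, by push_cast; norm_num⟩
  -- splitting of Icc 1 K
  have hsplit : Finset.Icc 1 K = insert 1 (Finset.Icc 2 K) := by
    ext x; simp only [Finset.mem_Icc, Finset.mem_insert]; omega
  have h1notin : (1:ℕ) ∉ Finset.Icc 2 K := by simp
  have hS6lt2 : S6 < 2 := by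
    have htail := tail_le K (by omega)
    have hKpos : (0:ℝ) < (K:ℝ) := by exact_mod_cast Nat.lt_of_lt_of_le Nat.zero_lt_two hK
    have h1K' : (0:ℝ) < 1 / (K:ℝ) := by positivity
    rw [hS6def, hsplit, Finset.sum_insert h1notin]
    have hhead : (1:ℝ) / ((1:ℕ):ℝ) ^ 6 = 1 := by norm_num
    rw [hhead]
    linarith
  -- γ facts
  have ha : (0:ℝ) < 2 * k₁ / k₂ := by positivity
  have hb : (0:ℝ) < S12 / S6 := by positivity
  have hγpos : 0 < γ := by
    rw [hγdef, gammaLJ, ← hS12def, ← hS6def]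
    exact mul_pos (Real.rpow_pos_of_pos ha _) (Real.rpow_pos_of_pos hb _)
  have hγ6 : γ ^ 6 = (2 * k₁ / k₂) * (S12 / S6) := by
    rw [hγdef, gammaLJ, ← hS12def, ← hS6def, mul_pow,
      ← Real.rpow_natCast ((2 * k₁ / k₂) ^ ((1:ℝ)/6)) 6,
      ← Real.rpow_natCast ((S12 / S6) ^ ((1:ℝ)/6)) 6,
      ← Real.rpow_mul ha.le, ← Real.rpow_mul hb.le]
    norm_num
  have hkey : k₂ * γ ^ 6 * S6 = 2 * k₁ * S12 := by
    rw [hγ6]; field_simp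
  -- derivative at γ is negative
  have hDγ : deriv (LJr k₁ k₂) γ = 6 * (k₂ * γ ^ 6 - 2 * k₁) / γ ^ 13 :=
    LJr_deriv k₁ k₂ hγpos
  have hnum : k₂ * γ ^ 6 - 2 * k₁ < 0 := by nlinarith
  have hDγneg : deriv (LJr k₁ k₂) γ < 0 := by
    rw [hDγ]
    apply div_neg_of_neg_of_pos (by linarith) (by positivity)
  -- derivative at jγ is positive for j ≥ 2
  have hDjpos : ∀ j ∈ Finset.Icc 2 K, 0 < deriv (LJr k₁ k₂) ((j:ℝ) * γ) := by
    intro j hj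
    have hj2 : 2 ≤ j := (Finset.mem_Icc.mp hj).1
    have hjR : (2:ℝ) ≤ (j:ℝ) := by exact_mod_cast hj2
    have hjpos : (0:ℝ) < (j:ℝ) := by linarith
    rw [LJr_deriv k₁ k₂ (mul_pos hjpos hγpos)]
    apply div_pos _ (by positivity)
    have hj6 : (64:ℝ) ≤ (j:ℝ)^6 := by
      calc (64:ℝ) = 2^6 := by norm_num
        _ ≤ (j:ℝ)^6 := pow_le_pow_left₀ (by norm_num) hjR 6
    have hexp : k₂ * ((j:ℝ) * γ)^6 = (j:ℝ)^6 * (k₂ * γ^6) := by ring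
    have h64 : S6 < (j:ℝ)^6 * S12 := by nlinarith
    nlinarith [mul_pos hjpos hγpos]
  constructor
  · exact hDγneg
  constructor
  · intro j hj
    have hj2 : 2 ≤ j := (Finset.mem_Icc.mp hj).1
    have hjpos : (0:ℝ) < (j:ℝ) := by exact_mod_cast Nat.lt_of_lt_of_le Nat.zero_lt_two hj2
    have := hDjpos j hj
    rw [cLJ, ← hγdef]
    apply div_pos_of_neg_of_neg
    · have : 0 < (j:ℝ) * deriv (LJr k₁ k₂) ((j:ℝ) * γ) := mul_pos hjpos this
      linarith
    · exact hDγneg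
  · -- the sum
    have hterm : ∀ j ∈ Finset.Icc 1 K, (j:ℝ) * deriv (LJr k₁ k₂) ((j:ℝ) * γ) =
        (6 * k₂ / γ ^ 7) * (1 / (j:ℝ)^6) - (12 * k₁ / γ ^ 13) * (1 / (j:ℝ)^12) := by
      intro j hj
      have hj1 : 1 ≤ j := (Finset.mem_Icc.mp hj).1
      have hjpos : (0:ℝ) < (j:ℝ) := by exact_mod_cast Nat.lt_of_lt_of_le Nat.zero_lt_one hj1
      rw [LJr_deriv k₁ k₂ (mul_pos hjpos hγpos)]
      field_simp
      ring
    have hsum0 : ∑ j ∈ Finset.Icc 1 K, (j:ℝ) * deriv (LJr k₁ k₂) ((j:ℝ) * γ) = 0 := by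
      rw [Finset.sum_congr rfl hterm, Finset.sum_sub_distrib, ← Finset.mul_sum,
        ← Finset.mul_sum, ← hS12def, ← hS6def]
      have hγne : γ ≠ 0 := hγpos.ne'
      field_simp
      linear_combination 6 * hkey
    have hsum1 : ∑ j ∈ Finset.Icc 2 K, (j:ℝ) * deriv (LJr k₁ k₂) ((j:ℝ) * γ) =
        - deriv (LJr k₁ k₂) γ := by
      rw [hsplit, Finset.sum_insert h1notin] at hsum0
      simp only [Nat.cast_one, one_mul] at hsum0
      linarith
    have : ∑ j ∈ Finset.Icc 2 K, cLJ k₁ k₂ K j =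
        (∑ j ∈ Finset.Icc 2 K, -((j:ℝ) * deriv (LJr k₁ k₂) ((j:ℝ) * γ))) /
          deriv (LJr k₁ k₂) γ := by
      rw [Finset.sum_div]
      apply Finset.sum_congr rfl
      intro j hj
      rw [cLJ, ← hγdef]
    rw [this, Finset.sum_neg_distrib, hsum1, neg_neg, div_self hDγneg.ne]
end
end

section
/- Let k₁,k₂>0, K≥2, J(z)=k₁/z¹²−k₂/z⁶ for z>0 and +∞ for z≤0, J_j(z):=J(jz), γ:=(2k₁/k₂)^{1/6}·((Σ_{j=1}^K j^{-12})/(Σ_{j=1}^K j^{-6}))^{1/6}, c_j:=−jJ'(jγ)/J'(γ), and J_{0,j}(z):=J_j(z)+(c_j/j)·inf{Σ_{s=1}^j J_1(z_s) : Σ_{s=1}^j z_s=jz} for j=2,…,K. Then for every j=2,…,K: liminf_{z→+∞} J_{0,j}(z) > J_{0,j}(γ). -/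
open Filter Finset Set

noncomputable section

/-- The Lennard-Jones potential, extended by `+∞` on `(-∞,0]`. -/
def LJ (k₁ k₂ : ℝ) (z : ℝ) : EReal :=
  if 0 < z then ((k₁ / z ^ 12 - k₂ / z ^ 6 : ℝ) : EReal) else ⊤

/-- `inf{Σ_{s=1}^j J_1(z_s) : Σ_{s=1}^j z_s = jz}`. -/
def infConv (k₁ k₂ : ℝ) (j : ℕ) (z : ℝ) : EReal :=
  sInf {y : EReal | ∃ p : Fin j → ℝ, (∑ s, p s) = j * z ∧ y = ∑ s, LJ k₁ k₂ (p s)}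

/-- The effective potential `J_{0,j}(z) = J_j(z) + (c_j/j)·inf{Σ J_1(z_s) : Σ z_s = jz}`. -/
def J0LJ (k₁ k₂ : ℝ) (K j : ℕ) (z : ℝ) : EReal :=
  LJ k₁ k₂ ((j : ℝ) * z) + ((cLJ k₁ k₂ K j / j : ℝ) : EReal) * infConv k₁ k₂ j z

namespace LJaux

lemma coe_sum {n : ℕ} (f : Fin n → ℝ) :
    ((∑ i, f i : ℝ) : EReal) = ∑ i, ((f i : ℝ) : EReal) :=
  map_sum (⟨⟨Real.toEReal, EReal.coe_zero⟩, EReal.coe_add⟩ : ℝ →+ EReal) f Finset.univ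

lemma sum6_le : ∀ K : ℕ, 1 ≤ K → ∑ i ∈ Finset.Icc 1 K, 1 / (i:ℝ)^6 ≤ 2 - 1/(K:ℝ) := by
  intro K
  induction K with
  | zero => omega
  | succ n ih =>
    intro _
    rcases Nat.eq_zero_or_pos n with h | h
    · subst h; norm_num
    · rw [Finset.sum_Icc_succ_top (by omega : 1 ≤ n + 1)]
      have hn0 : (0:ℝ) < n := by exact_mod_cast h
      have hn1 : (0:ℝ) < (n:ℝ) + 1 := by linarith
      have key : 1/((n:ℝ)+1)^6 ≤ 1/(n:ℝ) - 1/((n:ℝ)+1) := by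
        rw [div_sub_div _ _ (ne_of_gt hn0) (ne_of_gt hn1)]
        rw [div_le_div_iff₀ (by positivity) (by positivity)]
        have h26 : ((n:ℝ)+1)^2 ≤ ((n:ℝ)+1)^6 :=
          pow_le_pow_right₀ (by linarith) (by norm_num)
        nlinarith [h26]
      have ihn := ih h
      push_cast
      push_cast at ihn
      linarith

lemma deriv_LJr (k₁ k₂ : ℝ) {z : ℝ} (hz : z ≠ 0) :
    deriv (LJr k₁ k₂) z = -12*k₁/z^13 + 6*k₂/z^7 := by
  have h1 : HasDerivAt (fun w : ℝ => k₁ / w^12) (-12*k₁/z^13) z := by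
    have h : HasDerivAt (fun w : ℝ => k₁ / w^12) _ z := (hasDerivAt_const z k₁).div (hasDerivAt_pow 12 z) (pow_ne_zero 12 hz)
    convert h using 1
    field_simp
    ring
  have h2 : HasDerivAt (fun w : ℝ => k₂ / w^6) (-6*k₂/z^7) z := by
    have h : HasDerivAt (fun w : ℝ => k₂ / w^6) _ z := (hasDerivAt_const z k₂).div (hasDerivAt_pow 6 z) (pow_ne_zero 6 hz)
    convert h using 1
    field_simp
    ring
  have H : HasDerivAt (LJr k₁ k₂) (-12*k₁/z^13 - (-6*k₂/z^7)) z := h1.sub h2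
  rw [H.deriv]; ring

lemma LJ_ge {k₁ : ℝ} (k₂ : ℝ) (hk₁ : 0 < k₁) (w : ℝ) :
    ((-(k₂^2/(4*k₁)) : ℝ) : EReal) ≤ LJ k₁ k₂ w := by
  unfold LJ
  split_ifs with h
  · rw [EReal.coe_le_coe_iff]
    have h6 : (0:ℝ) < w^6 := by positivity
    have key : k₁/w^12 - k₂/w^6 - (-(k₂^2/(4*k₁))) = (2*k₁/w^6 - k₂)^2/(4*k₁) := by
      field_simp
      ring
    nlinarith [div_nonneg (sq_nonneg (2*k₁/w^6 - k₂)) (by linarith : (0:ℝ) ≤ 4*k₁)]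
  · exact le_top

lemma LJ_eq {k₁ k₂ : ℝ} {w : ℝ} (hw : 0 < w) :
    LJ k₁ k₂ w = ((LJr k₁ k₂ w : ℝ) : EReal) := by
  simp [LJ, LJr, hw]

end LJaux

lemma LJaux.alg (k₁ k₂ jr m r : ℝ) (hk₁ : 0 < k₁) (hk₂ : 0 < k₂) (hj : 2 ≤ jr)
    (hm : 64 ≤ m) (hr2 : 1/2 < r) (hr1 : r < 1) (hj12 : jr^12 = m^2) :
    k₂^2*(1-2*(m*r))/(4*k₁*(m*r)^2) + ((m*r-1)/(jr^12*(1-r))) * (k₂^2*(1-2*r)/(4*k₁*r^2))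
      < ((m*r-1)/(jr^12*(1-r)))/jr * ((jr-1) * -(k₂^2/(4*k₁))) := by
  have hrpos : (0:ℝ) < r := by linarith
  have h1r : (0:ℝ) < 1 - r := by linarith
  have hjpos : (0:ℝ) < jr := by linarith
  have hmr : (1:ℝ) < m * r := by nlinarith
  have t : r^2*(m*r-1) ≤ r*(m-1) := by
    nlinarith [mul_nonneg (mul_nonneg hrpos.le h1r.le) (show (0:ℝ) ≤ m*(1+r)-1 by nlinarith)]
  have key : (0:ℝ) < jr*r*(m-1) - (jr-1)*r^2*(m*r-1) := by
    nlinarith [mul_le_mul_of_nonneg_left t (show (0:ℝ) ≤ jr - 1 by linarith),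
      mul_pos hrpos (show (0:ℝ) < m - 1 by linarith)]
  rw [hj12, ← sub_pos]
  have expand : ((m*r-1)/(m^2*(1-r)))/jr * ((jr-1) * -(k₂^2/(4*k₁)))
      - (k₂^2*(1-2*(m*r))/(4*k₁*(m*r)^2) + ((m*r-1)/(m^2*(1-r))) * (k₂^2*(1-2*r)/(4*k₁*r^2)))
      = (k₂^2/(4*k₁*m^2*r^2*(1-r)*jr)) * (jr*r*(m-1) - (jr-1)*r^2*(m*r-1)) := by
    field_simp
    ring
  rw [expand]
  exact mul_pos (by positivity) key

open LJaux in
set_option maxHeartbeats 1000000 in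
/-- assumption (viii) for Lennard-Jones potentials: for every `j = 2,…,K`,
`liminf_{z→+∞} J_{0,j}(z) > J_{0,j}(γ)`. -/
theorem liminf_effective_potential_at_top (k₁ k₂ : ℝ) (hk₁ : 0 < k₁) (hk₂ : 0 < k₂)
    (K : ℕ) (hK : 2 ≤ K) :
    ∀ j ∈ Finset.Icc 2 K,
      J0LJ k₁ k₂ K j (gammaLJ k₁ k₂ K) <
        Filter.liminf (fun z : ℝ => J0LJ k₁ k₂ K j z) Filter.atTop := by
  intro j hjmem
  rw [Finset.mem_Icc] at hjmem
  obtain ⟨hj2, hjK⟩ := hjmem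
  -- basic sums
  set S12 : ℝ := ∑ i ∈ Finset.Icc 1 K, 1 / (i:ℝ)^12 with hS12def
  set S6 : ℝ := ∑ i ∈ Finset.Icc 1 K, 1 / (i:ℝ)^6 with hS6def
  have h1mem : (1:ℕ) ∈ Finset.Icc 1 K := by simp; omega
  have hS12ge : (1:ℝ) ≤ S12 := by
    rw [hS12def]
    calc (1:ℝ) = 1/(1:ℝ)^12 := by norm_num
    _ = 1/((1:ℕ):ℝ)^12 := by norm_num
    _ ≤ _ := Finset.single_le_sum (f := fun i : ℕ => 1/(i:ℝ)^12) (fun i _ => by positivity) h1mem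
  have hS6lt : S6 < 2 := by
    have h := sum6_le K (by omega)
    have : (0:ℝ) < 1/(K:ℝ) := by
      have : (0:ℝ) < (K:ℝ) := by exact_mod_cast (by omega : 0 < K)
      positivity
    rw [hS6def]
    linarith
  have hS126 : S12 < S6 := by
    rw [hS12def, hS6def]
    apply Finset.sum_lt_sum
    · intro i hi
      rw [Finset.mem_Icc] at hi
      have h1i : (1:ℝ) ≤ (i:ℝ) := by exact_mod_cast hi.1
      have : (i:ℝ)^6 ≤ (i:ℝ)^12 := pow_le_pow_right₀ (by linarith) (by norm_num)
      exact one_div_le_one_div_of_le (by positivity) this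
    · refine ⟨2, by rw [Finset.mem_Icc]; omega, by norm_num⟩
  have hS6pos : (0:ℝ) < S6 := by linarith
  set r : ℝ := S12 / S6 with hrdef
  have hr1 : r < 1 := (div_lt_one hS6pos).2 hS126
  have hr2 : 1/2 < r := by
    rw [hrdef, lt_div_iff₀ hS6pos]
    linarith
  have hrpos : (0:ℝ) < r := by linarith
  have h1r : (0:ℝ) < 1 - r := by linarith
  -- gamma
  set γ : ℝ := gammaLJ k₁ k₂ K with hγdef
  have hA : (0:ℝ) < 2*k₁/k₂ := by positivity
  have hγpos : 0 < γ := by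
    rw [hγdef]
    unfold gammaLJ
    rw [← hS12def, ← hS6def, ← hrdef]
    exact mul_pos (Real.rpow_pos_of_pos hA _) (Real.rpow_pos_of_pos hrpos _)
  have hγ6 : γ^6 = (2*k₁/k₂) * r := by
    rw [hγdef]
    unfold gammaLJ
    rw [← hS12def, ← hS6def, ← hrdef, mul_pow,
      ← Real.rpow_natCast ((2*k₁/k₂) ^ ((1:ℝ)/6)) 6,
      ← Real.rpow_natCast (r ^ ((1:ℝ)/6)) 6,
      ← Real.rpow_mul hA.le, ← Real.rpow_mul hrpos.le]
    norm_num
  have hγne : γ ≠ 0 := ne_of_gt hγpos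
  -- j as real
  have hjR : (2:ℝ) ≤ (j:ℝ) := by exact_mod_cast hj2
  have hjpos : (0:ℝ) < (j:ℝ) := by linarith
  have hjγpos : 0 < (j:ℝ)*γ := mul_pos hjpos hγpos
  set m : ℝ := (j:ℝ)^6 with hmdef
  have hm64 : (64:ℝ) ≤ m := by
    rw [hmdef]
    calc (64:ℝ) = 2^6 := by norm_num
    _ ≤ (j:ℝ)^6 := pow_le_pow_left₀ (by norm_num) hjR 6
  have hmr : (1:ℝ) < m * r := by nlinarith
  -- derivatives
  have hDγ : deriv (LJr k₁ k₂) γ = 12*k₁*(r-1)/γ^13 := by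
    rw [deriv_LJr k₁ k₂ hγne]
    have h7 : 6*k₂/γ^7 = 12*k₁*r/γ^13 := by
      rw [div_eq_div_iff (by positivity) (by positivity)]
      have h13 : γ^13 = γ^6*γ^7 := by ring
      rw [h13, hγ6]
      field_simp
      ring
    rw [h7]; ring
  have hDj : deriv (LJr k₁ k₂) ((j:ℝ)*γ) = 12*k₁*(m*r-1)/((j:ℝ)^13*γ^13) := by
    rw [deriv_LJr k₁ k₂ (ne_of_gt hjγpos)]
    have h6 : ((j:ℝ)*γ)^6 = m*((2*k₁/k₂)*r) := by rw [mul_pow, hγ6, hmdef]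
    have h7 : 6*k₂/((j:ℝ)*γ)^7 = 12*k₁*(m*r)/((j:ℝ)^13*γ^13) := by
      rw [div_eq_div_iff (by positivity) (by positivity)]
      have h13 : (j:ℝ)^13*γ^13 = ((j:ℝ)*γ)^6*((j:ℝ)*γ)^7 := by ring
      rw [h13, h6]
      field_simp
      ring
    rw [h7, mul_pow]; ring
  set c : ℝ := cLJ k₁ k₂ K j with hcdef
  have hc : c = (m*r - 1)/((j:ℝ)^12*(1-r)) := by
    rw [hcdef]
    unfold cLJ
    rw [← hγdef, hDγ, hDj]
    have e1 : r - 1 ≠ 0 := by linarith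
    have e2 : 1 - r ≠ 0 := by linarith
    field_simp
    ring
  have hcpos : 0 < c := by
    rw [hc]
    exact div_pos (by linarith) (by positivity)
  -- values at γ
  set Jm : ℝ := -(k₂^2/(4*k₁)) with hJmdef
  have hLγ : LJr k₁ k₂ γ = k₂^2*(1-2*r)/(4*k₁*r^2) := by
    unfold LJr
    have h12 : γ^12 = ((2*k₁/k₂)*r)^2 := by rw [← hγ6]; ring
    rw [h12, hγ6]
    field_simp
    ring
  have hLjγ : LJr k₁ k₂ ((j:ℝ)*γ) = k₂^2*(1-2*(m*r))/(4*k₁*(m*r)^2) := by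
    unfold LJr
    have h6 : ((j:ℝ)*γ)^6 = (2*k₁/k₂)*(m*r) := by rw [mul_pow, hγ6, hmdef]; ring
    have h12 : ((j:ℝ)*γ)^12 = ((2*k₁/k₂)*(m*r))^2 := by rw [← h6]; ring
    rw [h12, h6]
    field_simp
    ring
  set L : ℝ := LJr k₁ k₂ ((j:ℝ)*γ) + c * LJr k₁ k₂ γ with hLdef
  set M : ℝ := c/(j:ℝ) * (((j:ℝ)-1) * Jm) with hMdef
  have hj12 : (j:ℝ)^12 = m^2 := by rw [hmdef]; ring
  have hLM : L < M := by
    rw [hLdef, hMdef, hc, hLγ, hLjγ, hJmdef]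
    have := LJaux.alg k₁ k₂ (j:ℝ) m r hk₁ hk₂ hjR hm64 hr2 hr1 hj12
    linarith [this]
    -- infConv bounds
  have hICle : ∀ z : ℝ, 0 < z → infConv k₁ k₂ j z ≤ (((j:ℝ) * LJr k₁ k₂ z : ℝ) : EReal) := by
    intro z hz
    apply sInf_le
    refine ⟨fun _ => z, ?_, ?_⟩
    · simp [Finset.sum_const, Finset.card_univ, nsmul_eq_mul]
    · rw [show ((j:ℝ) * LJr k₁ k₂ z) = (∑ _s : Fin j, LJr k₁ k₂ z : ℝ) by
        simp [Finset.sum_const, Finset.card_univ, nsmul_eq_mul], LJaux.coe_sum]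
      exact Finset.sum_congr rfl fun s _ => (LJ_eq hz).symm
  have hICge : ∀ z : ℝ, 0 < z →
      ((((j:ℝ)-1) * Jm - k₂/z^6 : ℝ) : EReal) ≤ infConv k₁ k₂ j z := by
    intro z hz
    apply le_sInf
    rintro y ⟨p, hp, rfl⟩
    obtain ⟨s₀, -, hs₀⟩ := Finset.exists_max_image Finset.univ p
      ⟨(⟨0, by omega⟩ : Fin j), Finset.mem_univ _⟩
    have hps₀ : z ≤ p s₀ := by
      have hsum : (j:ℝ) * z ≤ (j:ℝ) * p s₀ := by
        rw [← hp]
        calc ∑ s, p s ≤ ∑ _s : Fin j, p s₀ :=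
              Finset.sum_le_sum fun s _ => hs₀ s (Finset.mem_univ s)
        _ = (j:ℝ) * p s₀ := by simp [Finset.sum_const, Finset.card_univ, nsmul_eq_mul]
      exact le_of_mul_le_mul_left hsum hjpos
    have hps₀pos : 0 < p s₀ := lt_of_lt_of_le hz hps₀
    set g : Fin j → ℝ := fun s => if s = s₀ then -(k₂/z^6) else Jm with hg
    have hgsum : (∑ s, g s) = ((j:ℝ)-1) * Jm - k₂/z^6 := by
      have h1 : ∀ s : Fin j, g s = Jm + (if s = s₀ then (-(k₂/z^6) - Jm) else 0) := by
        intro s; simp only [hg]; by_cases h : s = s₀ <;> simp [h]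
      rw [Finset.sum_congr rfl fun s _ => h1 s, Finset.sum_add_distrib,
        Finset.sum_const, Finset.card_univ,
        Finset.sum_ite_eq' Finset.univ s₀ (fun _ => -(k₂/z^6) - Jm)]
      simp only [Finset.mem_univ, if_true, Fintype.card_fin, nsmul_eq_mul]
      ring
    calc ((((j:ℝ)-1) * Jm - k₂/z^6 : ℝ) : EReal) = ((∑ s, g s : ℝ) : EReal) := by rw [hgsum]
    _ = ∑ s, ((g s : ℝ) : EReal) := coe_sum g
    _ ≤ ∑ s, LJ k₁ k₂ (p s) := by
        apply Finset.sum_le_sum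
        intro s _
        by_cases hss : s = s₀
        · subst hss
          simp only [hg, if_pos rfl]
          rw [LJ_eq hps₀pos, EReal.coe_le_coe_iff]
          have e1 : (0:ℝ) ≤ k₁/(p s)^12 := by positivity
          have e2 : k₂/(p s)^6 ≤ k₂/z^6 := by gcongr
          unfold LJr; linarith
        · simp only [hg, if_neg hss]
          rw [hJmdef]
          exact LJ_ge k₂ hk₁ (p s)
  have hJ0 : ∀ z : ℝ, 0 < z → ∃ I : ℝ, (((j:ℝ)-1) * Jm - k₂/z^6 ≤ I) ∧
      (I ≤ (j:ℝ) * LJr k₁ k₂ z) ∧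
      J0LJ k₁ k₂ K j z = ((LJr k₁ k₂ ((j:ℝ)*z) + c/(j:ℝ) * I : ℝ) : EReal) := by
    intro z hz
    have hle := hICle z hz
    have hge := hICge z hz
    have hneTop : infConv k₁ k₂ j z ≠ ⊤ := ne_top_of_le_ne_top (EReal.coe_ne_top _) hle
    have hneBot : infConv k₁ k₂ j z ≠ ⊥ := by
      intro h; rw [h, le_bot_iff] at hge; exact EReal.coe_ne_bot _ hge
    refine ⟨(infConv k₁ k₂ j z).toReal, ?_, ?_, ?_⟩
    · rw [← EReal.coe_le_coe_iff, EReal.coe_toReal hneTop hneBot]; exact hge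
    · rw [← EReal.coe_le_coe_iff, EReal.coe_toReal hneTop hneBot]; exact hle
    · unfold J0LJ
      rw [← hcdef, LJ_eq (mul_pos hjpos hz), EReal.coe_add, EReal.coe_mul,
        EReal.coe_toReal hneTop hneBot]
  obtain ⟨Iγ, hIγ1, hIγ2, hIγ3⟩ := hJ0 γ hγpos
  have hJ0γle : J0LJ k₁ k₂ K j γ ≤ ((L:ℝ) : EReal) := by
    rw [hIγ3, EReal.coe_le_coe_iff]
    have h1 : c/(j:ℝ) * Iγ ≤ c/(j:ℝ) * ((j:ℝ) * LJr k₁ k₂ γ) :=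
      mul_le_mul_of_nonneg_left hIγ2 (by positivity)
    have h2 : c/(j:ℝ) * ((j:ℝ) * LJr k₁ k₂ γ) = c * LJr k₁ k₂ γ := by
      field_simp
    rw [hLdef]; linarith
  have hδ : 0 < (M - L)/2 := by linarith
  have hev : ∀ᶠ z in atTop, (((L+M)/2 : ℝ) : EReal) ≤ J0LJ k₁ k₂ K j z := by
    have hBpos : (0:ℝ) < (1 + c/(j:ℝ))*k₂ := by positivity
    filter_upwards [eventually_ge_atTop (max 1 ((1 + c/(j:ℝ))*k₂ / ((M-L)/2)))] with z hzZ
    have hz1 : (1:ℝ) ≤ z := le_trans (le_max_left _ _) hzZ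
    have hz0 : (0:ℝ) < z := by linarith
    obtain ⟨I, hI1, hI2, hI3⟩ := hJ0 z hz0
    rw [hI3, EReal.coe_le_coe_iff]
    have e1 : -(k₂/z^6) ≤ LJr k₁ k₂ ((j:ℝ)*z) := by
      have e1a : k₂/((j:ℝ)*z)^6 ≤ k₂/z^6 := by
        gcongr
        nlinarith
      have e1b : (0:ℝ) ≤ k₁/((j:ℝ)*z)^12 := by positivity
      unfold LJr; linarith
    have e2 : c/(j:ℝ) * (((j:ℝ)-1)*Jm - k₂/z^6) ≤ c/(j:ℝ) * I :=
      mul_le_mul_of_nonneg_left hI1 (by positivity)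
    have e3 : (1 + c/(j:ℝ))*k₂/z^6 ≤ (M-L)/2 := by
      have hz6' : z ≤ z^6 := le_self_pow₀ hz1 (by norm_num)
      have hZ2 : (1 + c/(j:ℝ))*k₂ / ((M-L)/2) ≤ z := le_trans (le_max_right _ _) hzZ
      have hB2 : (1 + c/(j:ℝ))*k₂ ≤ z * ((M-L)/2) := (div_le_iff₀ hδ).1 hZ2
      calc (1 + c/(j:ℝ))*k₂/z^6 ≤ (1 + c/(j:ℝ))*k₂/z := by gcongr
      _ ≤ (M-L)/2 := by rw [div_le_iff₀ hz0]; linarith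
    have hexp : (1 + c/(j:ℝ))*k₂/z^6 = k₂/z^6 + c/(j:ℝ)*(k₂/z^6) := by ring
    have hMeq : c/(j:ℝ)*(((j:ℝ)-1)*Jm - k₂/z^6) = M - c/(j:ℝ)*(k₂/z^6) := by
      rw [hMdef]; ring
    linarith
  calc J0LJ k₁ k₂ K j γ ≤ ((L:ℝ) : EReal) := hJ0γle
  _ < (((L+M)/2 : ℝ) : EReal) := by
      rw [EReal.coe_lt_coe_iff]; linarith
  _ ≤ liminf (fun z : ℝ => J0LJ k₁ k₂ K j z) atTop :=
      Filter.le_liminf_of_le (by isBoundedDefault) hev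
end
end

section
/- Let k₁,k₂>0, K≥2, J(z)=k₁/z¹²−k₂/z⁶ for z>0 and +∞ for z≤0, J_j(z):=J(jz), J_CB:=Σ_{j=1}^K J_j, γ:=(2k₁/k₂)^{1/6}·((Σ_{j=1}^K j^{-12})/(Σ_{j=1}^K j^{-6}))^{1/6}, c_j:=−jJ'(jγ)/J'(γ), ψ_j(z):=J_j(z)+c_j J_1(z), and g_j(z):=+∞ for z≤0, ψ_j(z) for 0<z≤γ, ψ_j(γ) for z>γ (j=2,…,K). Define g_CB:ℝ→ℝ∪{+∞} by g_CB(z)=+∞ for z≤0, g_CB(z)=J_CB(z) for 0<z≤γ, and g_CB(z)=J_CB(γ) for z>γ. Then g_CB(z)=Σ_{j=2}^K g_j(z) for all z∈ℝ, g_CB is convex and lower semicontinuous with g_CB≤J_CB pointwise, and every convex lower semicontinuous h:ℝ→ℝ∪{+∞} with h≤J_CB pointwise satisfies h≤g_CB pointwise; i.e., g_CB is the lower semicontinuous convex envelope of J_CB. -/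
open Filter Finset Set

noncomputable section

/-- The Cauchy–Born energy density `J_CB(z) = Σ_{j=1}^K J(jz)`, with values in `ℝ ∪ {+∞}`. -/
def JCB (k₁ k₂ : ℝ) (K : ℕ) (z : ℝ) : EReal := ∑ j ∈ Finset.Icc 1 K, LJ k₁ k₂ ((j : ℝ) * z)

/-- `ψ_j(z) = J_j(z) + c_j·J_1(z)`. -/
def psiLJ (k₁ k₂ : ℝ) (K j : ℕ) (z : ℝ) : EReal :=
  LJ k₁ k₂ ((j : ℝ) * z) + ((cLJ k₁ k₂ K j : ℝ) : EReal) * LJ k₁ k₂ z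

/-- The lower semicontinuous convex envelope of `ψ_j`:
`g_j = +∞` on `(-∞,0]`, `= ψ_j` on `(0,γ]`, `= ψ_j(γ)` on `(γ,∞)`. -/
def gEnv (k₁ k₂ : ℝ) (K j : ℕ) (z : ℝ) : EReal :=
  if z ≤ 0 then ⊤
  else if z ≤ gammaLJ k₁ k₂ K then psiLJ k₁ k₂ K j z
  else psiLJ k₁ k₂ K j (gammaLJ k₁ k₂ K)

/-- The candidate lower semicontinuous convex envelope of `J_CB`:
`g_CB = +∞` on `(-∞,0]`, `= J_CB` on `(0,γ]`, `= J_CB(γ)` on `(γ,∞)`. -/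
def gCB (k₁ k₂ : ℝ) (K : ℕ) (z : ℝ) : EReal :=
  if z ≤ 0 then ⊤
  else if z ≤ gammaLJ k₁ k₂ K then JCB k₁ k₂ K z
  else JCB k₁ k₂ K (gammaLJ k₁ k₂ K)

/-- Convexity of an `ℝ ∪ {+∞}`-valued function on `ℝ`. -/
def ERealConvexOn (g : ℝ → EReal) : Prop :=
  ∀ x y : ℝ, ∀ a b : ℝ, 0 ≤ a → 0 ≤ b → a + b = 1 →
    g (a * x + b * y) ≤ (a : EReal) * g x + (b : EReal) * g y

namespace CBEnv

open Filter Finset Set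

lemma coe_sum (s : Finset ℕ) (f : ℕ → ℝ) :
    ((∑ i ∈ s, f i : ℝ) : EReal) = ∑ i ∈ s, ((f i : ℝ) : EReal) := by
  induction s using Finset.cons_induction with
  | empty => simp
  | cons a s ha ih => rw [Finset.sum_cons, Finset.sum_cons, EReal.coe_add, ih]

lemma sum_top {s : Finset ℕ} (hs : s.Nonempty) {f : ℕ → EReal}
    (h : ∀ i ∈ s, f i = ⊤) : ∑ i ∈ s, f i = ⊤ := by
  induction s using Finset.cons_induction with
  | empty => exact absurd hs (by simp)
  | cons a s ha ih =>
    rw [Finset.sum_cons, h a (by simp)]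
    rcases s.eq_empty_or_nonempty with rfl | hs'
    · simp
    · rw [ih hs' (fun i hi => h i (by simp [hi]))]
      simp

lemma hasDerivAt_cdivpow (c : ℝ) (n : ℕ) {x : ℝ} (hx : x ≠ 0) :
    HasDerivAt (fun z : ℝ => c / z ^ (n+1)) (-(c * (n+1)) / x ^ (n+2)) x := by
  have h := ((hasDerivAt_pow (n+1) x).inv (pow_ne_zero _ hx)).const_mul c
  have e : (fun z : ℝ => c / z ^ (n+1)) = fun z : ℝ => c * (z ^ (n+1))⁻¹ := by
    funext z; rw [div_eq_mul_inv]
  rw [e]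
  refine h.congr_deriv ?_
  simp only [Nat.add_sub_cancel]
  field_simp
  push_cast
  ring

lemma hasDerivAt_LJr (a b : ℝ) {x : ℝ} (hx : x ≠ 0) :
    HasDerivAt (LJr a b) (-(12*a) / x ^ 13 + 6*b / x ^ 7) x := by
  have h1 := hasDerivAt_cdivpow a 11 hx
  have h2 := hasDerivAt_cdivpow b 5 hx
  norm_num at h1 h2
  have h := h1.sub h2
  have e : LJr a b = fun z : ℝ => a / z ^ 12 - b / z ^ 6 := rfl
  rw [e]
  refine h.congr_deriv ?_
  ring

lemma deriv_LJr (a b : ℝ) {x : ℝ} (hx : x ≠ 0) :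
    deriv (LJr a b) x = -(12*a) / x ^ 13 + 6*b / x ^ 7 :=
  (hasDerivAt_LJr a b hx).deriv

end CBEnv
namespace CBEnv

open Filter Finset Set

def S6 (K : ℕ) : ℝ := ∑ j ∈ Finset.Icc 1 K, 1 / (j : ℝ) ^ 6
def S12 (K : ℕ) : ℝ := ∑ j ∈ Finset.Icc 1 K, 1 / (j : ℝ) ^ 12
def Ac (k₁ : ℝ) (K : ℕ) : ℝ := k₁ * S12 K
def Bc (k₂ : ℝ) (K : ℕ) : ℝ := k₂ * S6 K

lemma jpos {K j : ℕ} (hj : j ∈ Finset.Icc 1 K) : (0 : ℝ) < (j : ℝ) := by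
  have h := (Finset.mem_Icc.1 hj).1
  exact_mod_cast Nat.lt_of_lt_of_le Nat.zero_lt_one h

lemma S6_pos {K : ℕ} (hK : 1 ≤ K) : 0 < S6 K :=
  Finset.sum_pos (fun j hj => by have := jpos hj; positivity) ⟨1, by simp [hK]⟩

lemma S12_pos {K : ℕ} (hK : 1 ≤ K) : 0 < S12 K :=
  Finset.sum_pos (fun j hj => by have := jpos hj; positivity) ⟨1, by simp [hK]⟩

lemma S12_lt_S6 {K : ℕ} (hK : 2 ≤ K) : S12 K < S6 K := by
  refine Finset.sum_lt_sum (fun j hj => ?_) ⟨2, by simp [Finset.mem_Icc]; omega, by norm_num⟩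
  have h1 : (1 : ℝ) ≤ (j : ℝ) := by
    have := (Finset.mem_Icc.1 hj).1; exact_mod_cast this
  have h2 : (j : ℝ) ^ 6 ≤ (j : ℝ) ^ 12 := pow_le_pow_right₀ h1 (by norm_num)
  exact one_div_le_one_div_of_le (by positivity) h2

lemma gamma_pos {k₁ k₂ : ℝ} (hk₁ : 0 < k₁) (hk₂ : 0 < k₂) {K : ℕ} (hK : 1 ≤ K) :
    0 < gammaLJ k₁ k₂ K := by
  unfold gammaLJ
  have h1 : (0:ℝ) < 2 * k₁ / k₂ := by positivity
  have h2 : (0:ℝ) < (∑ j ∈ Finset.Icc 1 K, 1 / (j : ℝ) ^ 12) /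
      (∑ j ∈ Finset.Icc 1 K, 1 / (j : ℝ) ^ 6) := div_pos (S12_pos hK) (S6_pos hK)
  exact mul_pos (Real.rpow_pos_of_pos h1 _) (Real.rpow_pos_of_pos h2 _)

lemma gamma_pow6 {k₁ k₂ : ℝ} (hk₁ : 0 < k₁) (hk₂ : 0 < k₂) {K : ℕ} (hK : 1 ≤ K) :
    (gammaLJ k₁ k₂ K) ^ 6 = 2 * k₁ / k₂ * (S12 K / S6 K) := by
  have h1 : (0:ℝ) ≤ 2 * k₁ / k₂ := by positivity
  have h2 : (0:ℝ) ≤ S12 K / S6 K := le_of_lt (div_pos (S12_pos hK) (S6_pos hK))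
  have h2' : (0:ℝ) ≤ (∑ j ∈ Finset.Icc 1 K, 1 / (j : ℝ) ^ 12) /
      (∑ j ∈ Finset.Icc 1 K, 1 / (j : ℝ) ^ 6) := h2
  unfold gammaLJ
  rw [mul_pow, ← Real.rpow_natCast ((2 * k₁ / k₂) ^ ((1:ℝ)/6)) 6,
    ← Real.rpow_natCast (((∑ j ∈ Finset.Icc 1 K, 1 / (j : ℝ) ^ 12) /
      (∑ j ∈ Finset.Icc 1 K, 1 / (j : ℝ) ^ 6)) ^ ((1:ℝ)/6)) 6,
    ← Real.rpow_mul h1, ← Real.rpow_mul h2']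
  norm_num
  left
  rw [S12, S6]
  simp [one_div]

lemma key_rel {k₁ k₂ : ℝ} (hk₁ : 0 < k₁) (hk₂ : 0 < k₂) {K : ℕ} (hK : 1 ≤ K) :
    Bc k₂ K * (gammaLJ k₁ k₂ K) ^ 6 = 2 * Ac k₁ K := by
  rw [gamma_pow6 hk₁ hk₂ hK, Bc, Ac]
  have h2 : k₂ ≠ 0 := hk₂.ne'
  have h6 : S6 K ≠ 0 := (S6_pos hK).ne'
  field_simp

lemma kgamma6_lt {k₁ k₂ : ℝ} (hk₁ : 0 < k₁) (hk₂ : 0 < k₂) {K : ℕ} (hK : 2 ≤ K) :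
    k₂ * (gammaLJ k₁ k₂ K) ^ 6 < 2 * k₁ := by
  rw [gamma_pow6 hk₁ hk₂ (le_trans one_le_two hK)]
  have hS6 := S6_pos (le_trans one_le_two hK)
  have h : S12 K / S6 K < 1 := (div_lt_one hS6).2 (S12_lt_S6 hK)
  calc k₂ * (2 * k₁ / k₂ * (S12 K / S6 K)) = 2 * k₁ * (S12 K / S6 K) := by
        field_simp
    _ < 2 * k₁ * 1 := by
        apply mul_lt_mul_of_pos_left h (by positivity)
    _ = 2 * k₁ := mul_one _

end CBEnv
namespace CBEnv

open Filter Finset Set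

variable {a b g : ℝ}

lemma LJr_continuousAt (a b : ℝ) {x : ℝ} (hx : x ≠ 0) : ContinuousAt (LJr a b) x := by
  have h := (hasDerivAt_LJr a b hx).differentiableAt
  exact h.continuousAt

lemma LJr_continuousOn (a b : ℝ) : ContinuousOn (LJr a b) (Set.Ioc 0 g) :=
  fun x hx => (LJr_continuousAt a b hx.1.ne').continuousWithinAt

lemma deriv_LJr_nonpos (ha : 0 < a) (hb : 0 < b) (hg : 0 < g)
    (hrel : b * g ^ 6 = 2 * a) {x : ℝ} (hx : 0 < x) (hxg : x ≤ g) :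
    deriv (LJr a b) x ≤ 0 := by
  rw [deriv_LJr a b hx.ne']
  have hx6 : x ^ 6 ≤ g ^ 6 := pow_le_pow_left₀ hx.le hxg 6
  have h1 : b * x ^ 6 ≤ 2 * a := by nlinarith
  have h2 : 6 * b / x ^ 7 ≤ 12 * a / x ^ 13 := by
    rw [div_le_div_iff₀ (by positivity) (by positivity)]
    have h13 : x ^ 13 = x ^ 7 * x ^ 6 := by ring
    nlinarith [pow_pos hx 7]
  have e : -(12*a) / x ^ 13 = -(12 * a / x ^ 13) := by ring
  linarith
 
lemma antitoneOn_LJr (ha : 0 < a) (hb : 0 < b) (hg : 0 < g)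
    (hrel : b * g ^ 6 = 2 * a) : AntitoneOn (LJr a b) (Set.Ioc 0 g) := by
  apply antitoneOn_of_deriv_nonpos (convex_Ioc 0 g) (LJr_continuousOn a b)
  · intro x hx
    rw [interior_Ioc] at hx
    exact ((hasDerivAt_LJr a b hx.1.ne').differentiableAt).differentiableWithinAt
  · intro x hx
    rw [interior_Ioc] at hx
    exact deriv_LJr_nonpos ha hb hg hrel hx.1 hx.2.le

lemma convexOn_LJr (ha : 0 < a) (hb : 0 < b) (hg : 0 < g)
    (hrel : b * g ^ 6 = 2 * a) : ConvexOn ℝ (Set.Ioc 0 g) (LJr a b) := by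
  apply convexOn_of_deriv2_nonneg (convex_Ioc 0 g) (LJr_continuousOn a b)
  · intro x hx
    rw [interior_Ioc] at hx
    exact ((hasDerivAt_LJr a b hx.1.ne').differentiableAt).differentiableWithinAt
  · -- deriv differentiable on interior
    rw [interior_Ioc]
    have heq : Set.EqOn (deriv (LJr a b))
        (fun x => -(12*a) / x ^ 13 + 6*b / x ^ 7) (Set.Ioo 0 g) :=
      fun x hx => deriv_LJr a b hx.1.ne'
    apply DifferentiableOn.congr _ heq
    intro x hx
    have h1 := hasDerivAt_cdivpow (-(12*a)) 12 hx.1.ne'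
    have h2 := hasDerivAt_cdivpow (6*b) 6 hx.1.ne'
    norm_num at h1 h2
    exact ((h1.add h2).differentiableAt).differentiableWithinAt
  · intro x hx
    rw [interior_Ioc] at hx
    have hx0 : (0:ℝ) < x := hx.1
    have heq : deriv (LJr a b) =ᶠ[nhds x]
        (fun x => -(12*a) / x ^ 13 + 6*b / x ^ 7) := by
      filter_upwards [isOpen_Ioo.mem_nhds hx] with w hw
      exact deriv_LJr a b hw.1.ne'
    have h1 := hasDerivAt_cdivpow (-(12*a)) 12 hx0.ne'
    have h2 := hasDerivAt_cdivpow (6*b) 6 hx0.ne'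
    norm_num at h1 h2
    have hd := (h1.add h2).deriv
    have hiter : deriv^[2] (LJr a b) x = deriv (fun x => -(12*a) / x ^ 13 + 6*b / x ^ 7) x := by
      rw [Function.iterate_succ, Function.iterate_one, Function.comp_apply]
      exact heq.deriv_eq
    rw [hiter]
    erw [hd]
    have hx6 : x ^ 6 ≤ g ^ 6 := pow_le_pow_left₀ hx0.le hx.2.le 6
    have h1' : b * x ^ 6 ≤ 2 * a := by nlinarith
    have h2' : 42 * b / x ^ 8 ≤ 156 * a / x ^ 14 := by
      rw [div_le_div_iff₀ (by positivity) (by positivity)]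
      have h14 : x ^ 14 = x ^ 8 * x ^ 6 := by ring
      nlinarith [pow_pos hx0 8]
    have e1 : 12 * a * 13 / x ^ 14 = 156 * a / x ^ 14 := by ring
    have e2 : -(6*b*7) / x ^ 8 = -(42 * b / x ^ 8) := by ring
    linarith

lemma LJr_min (ha : 0 < a) (hb : 0 < b) (hg : 0 < g)
    (hrel : b * g ^ 6 = 2 * a) {z : ℝ} (hz : 0 < z) :
    LJr a b g ≤ LJr a b z := by
  have hz6 : z ^ 6 ≠ 0 := by positivity
  have hg6 : (g:ℝ) ^ 6 ≠ 0 := by positivity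
  have hb' : b = 2 * a / g ^ 6 := by
    rw [eq_div_iff hg6]; linarith [hrel]
  have key : LJr a b z - LJr a b g = a * ((z^6)⁻¹ - (g^6)⁻¹)^2 := by
    unfold LJr
    rw [hb']
    field_simp
    ring
  nlinarith [sq_nonneg ((z^6)⁻¹ - (g^6)⁻¹), ha.le]

lemma min_image (hg : 0 < g) : (fun z : ℝ => min z g) '' (Set.Ioi 0) = Set.Ioc 0 g := by
  ext y
  constructor
  · rintro ⟨z, hz, rfl⟩
    exact ⟨lt_min hz hg, min_le_right _ _⟩
  · rintro ⟨hy1, hy2⟩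
    exact ⟨y, hy1, min_eq_left hy2⟩

lemma concaveOn_min (g : ℝ) : ConcaveOn ℝ (Set.Ioi (0:ℝ)) (fun z : ℝ => min z g) := by
  have h1 : ConcaveOn ℝ (Set.Ioi (0:ℝ)) (fun z : ℝ => z) :=
    concaveOn_id (convex_Ioi 0)
  have h2 : ConcaveOn ℝ (Set.Ioi (0:ℝ)) (fun _ : ℝ => g) := concaveOn_const _ (convex_Ioi 0)
  exact h1.inf h2

lemma convexOn_phi (ha : 0 < a) (hb : 0 < b) (hg : 0 < g)
    (hrel : b * g ^ 6 = 2 * a) :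
    ConvexOn ℝ (Set.Ioi 0) (fun z : ℝ => LJr a b (min z g)) := by
  have h := ConvexOn.comp_concaveOn
    (f := fun z : ℝ => min z g) (g := LJr a b) (s := Set.Ioi 0)
    (by rw [min_image hg]; exact convexOn_LJr ha hb hg hrel)
    (concaveOn_min g)
    (by rw [min_image hg]; exact antitoneOn_LJr ha hb hg hrel)
  exact h

lemma tendsto_LJr_atTop (ha : 0 < a) (hb : 0 < b) :
    Tendsto (LJr a b) (nhdsWithin 0 (Set.Ioi 0)) atTop := by
  have h3 : Tendsto (fun w : ℝ => w ^ 12) (nhdsWithin 0 (Set.Ioi 0)) (nhdsWithin 0 (Set.Ioi 0)) := by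
    rw [tendsto_nhdsWithin_iff]
    constructor
    · have := (continuous_pow 12).tendsto (0:ℝ)
      simpa using this.mono_left nhdsWithin_le_nhds
    · filter_upwards [self_mem_nhdsWithin] with w hw
      exact pow_pos (show (0:ℝ) < w from hw) 12
  have h2 : Tendsto (fun w : ℝ => (w ^ 12)⁻¹) (nhdsWithin 0 (Set.Ioi 0)) atTop :=
    tendsto_inv_nhdsGT_zero.comp h3
  have h1 : Tendsto (fun w : ℝ => a - b * w ^ 6) (nhdsWithin 0 (Set.Ioi 0)) (nhds a) := by
    have : Tendsto (fun w : ℝ => a - b * w ^ 6) (nhds 0) (nhds (a - b * 0 ^ 6)) := by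
      apply Tendsto.sub tendsto_const_nhds
      exact (tendsto_const_nhds.mul ((continuous_pow 6).tendsto 0))
    norm_num at this
    exact this.mono_left nhdsWithin_le_nhds
  have h := h1.pos_mul_atTop ha h2
  apply h.congr'
  filter_upwards [self_mem_nhdsWithin] with w hw
  have hw0 : (0:ℝ) < w := hw
  have hw6 : w ^ 6 ≠ 0 := by positivity
  have hw12 : w ^ 12 ≠ 0 := by positivity
  unfold LJr
  field_simp

lemma tendsto_LJr_zero (a b : ℝ) : Tendsto (LJr a b) atTop (nhds 0) := by
  have h1 : Tendsto (fun w : ℝ => a / w ^ 12) atTop (nhds 0) :=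
    tendsto_const_nhds.div_atTop (tendsto_pow_atTop (by norm_num))
  have h2 : Tendsto (fun w : ℝ => b / w ^ 6) atTop (nhds 0) :=
    tendsto_const_nhds.div_atTop (tendsto_pow_atTop (by norm_num))
  have := h1.sub h2
  norm_num at this
  exact this

end CBEnv
namespace CBEnv

open Filter Finset Set

lemma LJ_coe {k₁ k₂ x : ℝ} (hx : 0 < x) : LJ k₁ k₂ x = ((LJr k₁ k₂ x : ℝ) : EReal) := by
  unfold LJ LJr
  rw [if_pos hx]

lemma LJ_top {k₁ k₂ x : ℝ} (hx : x ≤ 0) : LJ k₁ k₂ x = ⊤ := by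
  unfold LJ
  rw [if_neg (not_lt.2 hx)]

lemma LJr_sum (k₁ k₂ : ℝ) (K : ℕ) (z : ℝ) :
    ∑ j ∈ Finset.Icc 1 K, LJr k₁ k₂ ((j : ℝ) * z) = LJr (Ac k₁ K) (Bc k₂ K) z := by
  have hterm : ∀ j ∈ Finset.Icc 1 K,
      LJr k₁ k₂ ((j : ℝ) * z) = k₁ * (1 / (j:ℝ)^12) / z ^ 12 - k₂ * (1 / (j:ℝ)^6) / z ^ 6 := by
    intro j hj
    unfold LJr
    rw [mul_pow, mul_pow]
    simp only [div_eq_mul_inv, mul_inv, one_div]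
    ring
  rw [Finset.sum_congr rfl hterm, Finset.sum_sub_distrib]
  unfold LJr Ac Bc S12 S6
  rw [← Finset.sum_div, ← Finset.sum_div, ← Finset.mul_sum, ← Finset.mul_sum]

lemma JCB_top {k₁ k₂ : ℝ} {K : ℕ} (hK : 1 ≤ K) {z : ℝ} (hz : z ≤ 0) :
    JCB k₁ k₂ K z = ⊤ := by
  unfold JCB
  apply sum_top ⟨1, by simp [hK]⟩
  intro j hj
  apply LJ_top
  have hj0 : (0:ℝ) < (j:ℝ) := jpos hj
  exact mul_nonpos_of_nonneg_of_nonpos hj0.le hz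

lemma JCB_coe (k₁ k₂ : ℝ) (K : ℕ) {z : ℝ} (hz : 0 < z) :
    JCB k₁ k₂ K z = ((LJr (Ac k₁ K) (Bc k₂ K) z : ℝ) : EReal) := by
  unfold JCB
  rw [← LJr_sum k₁ k₂ K z, coe_sum]
  apply Finset.sum_congr rfl
  intro j hj
  exact LJ_coe (mul_pos (jpos hj) hz)

lemma gCB_pos {k₁ k₂ : ℝ} {K : ℕ} {z : ℝ} (hz : 0 < z)
    (hγ : 0 < gammaLJ k₁ k₂ K) :
    gCB k₁ k₂ K z = ((LJr (Ac k₁ K) (Bc k₂ K) (min z (gammaLJ k₁ k₂ K)) : ℝ) : EReal) := by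
  unfold gCB
  rw [if_neg (not_le.2 hz)]
  by_cases h : z ≤ gammaLJ k₁ k₂ K
  · rw [if_pos h, min_eq_left h, JCB_coe k₁ k₂ K hz]
  · rw [if_neg h, min_eq_right (le_of_not_ge h), JCB_coe k₁ k₂ K hγ]

lemma gCB_ne_bot (k₁ k₂ : ℝ) (K : ℕ) (z : ℝ) (hK : 1 ≤ K) (hγ : 0 < gammaLJ k₁ k₂ K) :
    gCB k₁ k₂ K z ≠ ⊥ := by
  by_cases hz : 0 < z
  · rw [gCB_pos hz hγ]; exact EReal.coe_ne_bot _
  · unfold gCB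
    rw [if_pos (not_lt.1 hz)]
    simp

end CBEnv
namespace CBEnv

open Filter Finset Set

lemma derivγ_neg {k₁ k₂ : ℝ} (hk₁ : 0 < k₁) (hk₂ : 0 < k₂) {K : ℕ} (hK : 2 ≤ K) :
    deriv (LJr k₁ k₂) (gammaLJ k₁ k₂ K) < 0 := by
  have hγ : 0 < gammaLJ k₁ k₂ K := gamma_pos hk₁ hk₂ (le_trans one_le_two hK)
  rw [deriv_LJr k₁ k₂ hγ.ne']
  set γ := gammaLJ k₁ k₂ K
  have hlt : k₂ * γ ^ 6 < 2 * k₁ := kgamma6_lt hk₁ hk₂ hK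
  have e : -(12*k₁) / γ ^ 13 + 6*k₂ / γ ^ 7 = (6 * (k₂ * γ ^ 6) - 12 * k₁) / γ ^ 13 := by
    field_simp
    ring
  rw [e]
  apply div_neg_of_neg_of_pos _ (by positivity)
  linarith

lemma Icc_insert (K : ℕ) (hK : 2 ≤ K) :
    Finset.Icc 1 K = insert 1 (Finset.Icc 2 K) := by
  ext x
  simp only [Finset.mem_Icc, Finset.mem_insert]
  omega

lemma sum_jderiv {k₁ k₂ : ℝ} (hk₁ : 0 < k₁) (hk₂ : 0 < k₂) {K : ℕ} (hK : 2 ≤ K) :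
    ∑ j ∈ Finset.Icc 1 K, (j : ℝ) * deriv (LJr k₁ k₂) ((j : ℝ) * gammaLJ k₁ k₂ K) = 0 := by
  have hγ : 0 < gammaLJ k₁ k₂ K := gamma_pos hk₁ hk₂ (le_trans one_le_two hK)
  set γ := gammaLJ k₁ k₂ K with hγdef
  have hterm : ∀ j ∈ Finset.Icc 1 K,
      (j : ℝ) * deriv (LJr k₁ k₂) ((j : ℝ) * γ)
        = (-(12*k₁)) * (1 / (j:ℝ)^12) / γ ^ 13 + (6*k₂) * (1 / (j:ℝ)^6) / γ ^ 7 := by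
    intro j hj
    have hj0 : (0:ℝ) < (j:ℝ) := jpos hj
    rw [deriv_LJr k₁ k₂ (by positivity)]
    rw [mul_pow, mul_pow]
    field_simp
  rw [Finset.sum_congr rfl hterm, Finset.sum_add_distrib, ← Finset.sum_div, ← Finset.sum_div,
    ← Finset.mul_sum, ← Finset.mul_sum]
  have h12 : ∑ j ∈ Finset.Icc 1 K, 1 / (j:ℝ)^12 = S12 K := rfl
  have h6 : ∑ j ∈ Finset.Icc 1 K, 1 / (j:ℝ)^6 = S6 K := rfl
  rw [h12, h6]
  have hrel : k₂ * S6 K * γ ^ 6 = 2 * (k₁ * S12 K) := key_rel hk₁ hk₂ (le_trans one_le_two hK)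
  field_simp
  linear_combination 6 * hrel

lemma sum_c {k₁ k₂ : ℝ} (hk₁ : 0 < k₁) (hk₂ : 0 < k₂) {K : ℕ} (hK : 2 ≤ K) :
    ∑ j ∈ Finset.Icc 2 K, cLJ k₁ k₂ K j = 1 := by
  have hD : deriv (LJr k₁ k₂) (gammaLJ k₁ k₂ K) ≠ 0 := (derivγ_neg hk₁ hk₂ hK).ne
  unfold cLJ
  rw [← Finset.sum_div]
  rw [div_eq_one_iff_eq hD]
  have h := sum_jderiv hk₁ hk₂ hK
  rw [Icc_insert K hK, Finset.sum_insert (by simp)] at h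
  simp only [Nat.cast_one, one_mul] at h
  have : ∑ j ∈ Finset.Icc 2 K, -((j : ℝ) * deriv (LJr k₁ k₂) ((j : ℝ) * gammaLJ k₁ k₂ K))
      = -∑ j ∈ Finset.Icc 2 K, (j : ℝ) * deriv (LJr k₁ k₂) ((j : ℝ) * gammaLJ k₁ k₂ K) := by
    rw [Finset.sum_neg_distrib]
  rw [this]
  linarith

lemma psi_sum {k₁ k₂ : ℝ} (hk₁ : 0 < k₁) (hk₂ : 0 < k₂) {K : ℕ} (hK : 2 ≤ K)
    {w : ℝ} (hw : 0 < w) :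
    ∑ j ∈ Finset.Icc 2 K, psiLJ k₁ k₂ K j w = JCB k₁ k₂ K w := by
  have hterm : ∀ j ∈ Finset.Icc 2 K, psiLJ k₁ k₂ K j w
      = ((LJr k₁ k₂ ((j:ℝ) * w) + cLJ k₁ k₂ K j * LJr k₁ k₂ w : ℝ) : EReal) := by
    intro j hj
    have hj0 : (0:ℝ) < (j:ℝ) := by
      have := (Finset.mem_Icc.1 hj).1
      exact_mod_cast Nat.lt_of_lt_of_le Nat.zero_lt_two this
    unfold psiLJ
    rw [LJ_coe (mul_pos hj0 hw), LJ_coe hw, ← EReal.coe_mul, ← EReal.coe_add]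
  rw [Finset.sum_congr rfl hterm, ← coe_sum]
  have hreal : ∑ j ∈ Finset.Icc 2 K, (LJr k₁ k₂ ((j:ℝ) * w) + cLJ k₁ k₂ K j * LJr k₁ k₂ w)
      = ∑ j ∈ Finset.Icc 1 K, LJr k₁ k₂ ((j:ℝ) * w) := by
    rw [Finset.sum_add_distrib, ← Finset.sum_mul, sum_c hk₁ hk₂ hK, one_mul]
    rw [Icc_insert K hK, Finset.sum_insert (by simp)]
    rw [Nat.cast_one, one_mul]
    ring
  rw [hreal]
  unfold JCB
  rw [coe_sum]
  apply Finset.sum_congr rfl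
  intro j hj
  exact (LJ_coe (mul_pos (jpos hj) hw)).symm

end CBEnv
namespace CBEnv

open Filter Finset Set

lemma gCB_top {k₁ k₂ : ℝ} {K : ℕ} {z : ℝ} (hz : z ≤ 0) : gCB k₁ k₂ K z = ⊤ := by
  unfold gCB; rw [if_pos hz]

lemma gCB_mid {k₁ k₂ : ℝ} {K : ℕ} {z : ℝ} (hz : 0 < z) (hzγ : z ≤ gammaLJ k₁ k₂ K) :
    gCB k₁ k₂ K z = JCB k₁ k₂ K z := by
  unfold gCB; rw [if_neg (not_le.2 hz), if_pos hzγ]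

lemma gCB_big {k₁ k₂ : ℝ} {K : ℕ} {z : ℝ} (hz : 0 < z) (hzγ : ¬ z ≤ gammaLJ k₁ k₂ K) :
    gCB k₁ k₂ K z = JCB k₁ k₂ K (gammaLJ k₁ k₂ K) := by
  unfold gCB; rw [if_neg (not_le.2 hz), if_neg hzγ]

lemma gEnv_top {k₁ k₂ : ℝ} {K j : ℕ} {z : ℝ} (hz : z ≤ 0) : gEnv k₁ k₂ K j z = ⊤ := by
  unfold gEnv; rw [if_pos hz]

lemma gEnv_mid {k₁ k₂ : ℝ} {K j : ℕ} {z : ℝ} (hz : 0 < z) (hzγ : z ≤ gammaLJ k₁ k₂ K) :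
    gEnv k₁ k₂ K j z = psiLJ k₁ k₂ K j z := by
  unfold gEnv; rw [if_neg (not_le.2 hz), if_pos hzγ]

lemma gEnv_big {k₁ k₂ : ℝ} {K j : ℕ} {z : ℝ} (hz : 0 < z) (hzγ : ¬ z ≤ gammaLJ k₁ k₂ K) :
    gEnv k₁ k₂ K j z = psiLJ k₁ k₂ K j (gammaLJ k₁ k₂ K) := by
  unfold gEnv; rw [if_neg (not_le.2 hz), if_neg hzγ]

end CBEnv

/-- `g_CB = Σ_{j=2}^K g_j` pointwise, `g_CB` is convex and lower
semicontinuous with `g_CB ≤ J_CB`, and it dominates every convex lower semicontinuous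
minorant of `J_CB`; i.e. `g_CB` is the lower semicontinuous convex envelope `J_CB**`. -/
theorem envelope_of_cauchyBorn (k₁ k₂ : ℝ) (hk₁ : 0 < k₁) (hk₂ : 0 < k₂)
    (K : ℕ) (hK : 2 ≤ K) :
    (∀ z : ℝ, gCB k₁ k₂ K z = ∑ j ∈ Finset.Icc 2 K, gEnv k₁ k₂ K j z) ∧
    ERealConvexOn (gCB k₁ k₂ K) ∧
    LowerSemicontinuous (gCB k₁ k₂ K) ∧
    (∀ z : ℝ, gCB k₁ k₂ K z ≤ JCB k₁ k₂ K z) ∧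
    (∀ h : ℝ → EReal, ERealConvexOn h → LowerSemicontinuous h →
      (∀ z : ℝ, h z ≤ JCB k₁ k₂ K z) → ∀ z : ℝ, h z ≤ gCB k₁ k₂ K z) := by
  classical
  have hK1 : 1 ≤ K := le_trans one_le_two hK
  have hγ : 0 < gammaLJ k₁ k₂ K := CBEnv.gamma_pos hk₁ hk₂ hK1
  set γ := gammaLJ k₁ k₂ K with hγdef
  set A := CBEnv.Ac k₁ K with hA
  set B := CBEnv.Bc k₂ K with hB
  have hA0 : 0 < A := mul_pos hk₁ (CBEnv.S12_pos hK1)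
  have hB0 : 0 < B := mul_pos hk₂ (CBEnv.S6_pos hK1)
  have hrel : B * γ ^ 6 = 2 * A := CBEnv.key_rel hk₁ hk₂ hK1
  -- part 1
  have part1 : ∀ z : ℝ, gCB k₁ k₂ K z = ∑ j ∈ Finset.Icc 2 K, gEnv k₁ k₂ K j z := by
    intro z
    by_cases hz : z ≤ 0
    · rw [CBEnv.gCB_top hz]
      symm
      exact CBEnv.sum_top ⟨2, by simp [hK]⟩ (fun j hj => CBEnv.gEnv_top hz)
    · push_neg at hz
      by_cases hzγ : z ≤ γ
      · rw [CBEnv.gCB_mid hz hzγ, ← CBEnv.psi_sum hk₁ hk₂ hK hz]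
        exact Finset.sum_congr rfl (fun j hj => (CBEnv.gEnv_mid hz hzγ).symm)
      · rw [CBEnv.gCB_big hz hzγ, ← CBEnv.psi_sum hk₁ hk₂ hK hγ]
        exact Finset.sum_congr rfl (fun j hj => (CBEnv.gEnv_big hz hzγ).symm)
  -- convexity
  have hφ : ConvexOn ℝ (Set.Ioi 0) (fun z : ℝ => LJr A B (min z γ)) :=
    CBEnv.convexOn_phi hA0 hB0 hγ hrel
  have part2 : ERealConvexOn (gCB k₁ k₂ K) := by
    intro x y p q hp hq hpq
    rcases eq_or_lt_of_le hp with hp0 | hp'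
    · rw [← hp0] at hpq ⊢
      have hq1 : q = 1 := by linarith
      rw [hq1]
      simp
    rcases eq_or_lt_of_le hq with hq0 | hq'
    · rw [← hq0] at hpq ⊢
      have hp1 : p = 1 := by linarith
      rw [hp1]
      simp
    have hpE : (0 : EReal) < (p : EReal) := EReal.coe_pos.2 hp'
    have hqE : (0 : EReal) < (q : EReal) := EReal.coe_pos.2 hq'
    by_cases hx : x ≤ 0
    · rw [CBEnv.gCB_top hx, EReal.mul_top_of_pos hpE,
        EReal.top_add_of_ne_bot]
      · exact le_top
      · by_cases hy : y ≤ 0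
        · rw [CBEnv.gCB_top hy, EReal.mul_top_of_pos hqE]; simp
        · push_neg at hy
          rw [CBEnv.gCB_pos hy hγ, ← EReal.coe_mul]
          exact EReal.coe_ne_bot _
    by_cases hy : y ≤ 0
    · rw [CBEnv.gCB_top hy, EReal.mul_top_of_pos hqE,
        EReal.add_top_of_ne_bot]
      · exact le_top
      · push_neg at hx
        rw [CBEnv.gCB_pos hx hγ, ← EReal.coe_mul]
        exact EReal.coe_ne_bot _
    push_neg at hx hy
    have hcomb : 0 < p * x + q * y := add_pos (mul_pos hp' hx) (mul_pos hq' hy)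
    rw [CBEnv.gCB_pos hcomb hγ, CBEnv.gCB_pos hx hγ, CBEnv.gCB_pos hy hγ,
      ← EReal.coe_mul, ← EReal.coe_mul, ← EReal.coe_add, EReal.coe_le_coe_iff]
    have := hφ.2 (Set.mem_Ioi.2 hx) (Set.mem_Ioi.2 hy) hp hq hpq
    simpa using this
  -- lower semicontinuity
  have part3 : LowerSemicontinuous (gCB k₁ k₂ K) := by
    intro x
    rcases lt_trichotomy x 0 with hx | hx | hx
    · intro v hv
      filter_upwards [Iio_mem_nhds hx] with w hw
      rw [CBEnv.gCB_top (le_of_lt hw)]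
      exact lt_of_lt_of_le hv (by rw [CBEnv.gCB_top hx.le])
    · intro v hv
      rw [hx, CBEnv.gCB_top le_rfl] at hv
      obtain ⟨M, hvM, -⟩ := EReal.lt_iff_exists_real_btwn.1 hv
      have htd := CBEnv.tendsto_LJr_atTop hA0 hB0
      have hev1 : ∀ᶠ w in nhdsWithin 0 (Set.Ioi 0), M ≤ LJr A B w :=
        htd.eventually (eventually_ge_atTop M)
      have hev2 : ∀ᶠ w in nhdsWithin 0 (Set.Ioi 0), w < γ :=
        eventually_nhdsWithin_of_eventually_nhds (tendsto_id.eventually_lt_const hγ)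
      rw [hx, ← nhdsLE_sup_nhdsGT (0:ℝ)]
      rw [Filter.eventually_sup]
      constructor
      · filter_upwards [self_mem_nhdsWithin] with w hw
        rw [CBEnv.gCB_top hw]
        exact hvM.trans_le le_top
      · filter_upwards [hev1, hev2, self_mem_nhdsWithin] with w h1 h2 h3
        have hw0 : (0:ℝ) < w := h3
        rw [CBEnv.gCB_pos hw0 hγ, min_eq_left h2.le]
        exact lt_of_lt_of_le hvM (EReal.coe_le_coe_iff.2 h1)
    · have hcont : ContinuousAt (gCB k₁ k₂ K) x := by
        have hmin : ContinuousAt (fun z : ℝ => LJr A B (min z γ)) x := by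
          have h1 : ContinuousAt (fun z : ℝ => min z γ) x :=
            (continuous_id.min continuous_const).continuousAt
          have h2 : ContinuousAt (LJr A B) (min x γ) :=
            CBEnv.LJr_continuousAt A B (lt_min hx hγ).ne'
          have h3 := ContinuousAt.comp (f := fun z : ℝ => min z γ) h2 h1
          exact h3
        have : ContinuousAt (fun z : ℝ => ((LJr A B (min z γ) : ℝ) : EReal)) x :=
          continuous_coe_real_ereal.continuousAt.comp hmin
        apply this.congr
        filter_upwards [Ioi_mem_nhds hx] with w hw
        exact (CBEnv.gCB_pos hw hγ).symm
      exact hcont.lowerSemicontinuousAt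
  -- minorant
  have part4 : ∀ z : ℝ, gCB k₁ k₂ K z ≤ JCB k₁ k₂ K z := by
    intro z
    by_cases hz : z ≤ 0
    · rw [CBEnv.gCB_top hz, CBEnv.JCB_top hK1 hz]
    · push_neg at hz
      by_cases hzγ : z ≤ γ
      · rw [CBEnv.gCB_mid hz hzγ]
      · rw [CBEnv.gCB_pos hz hγ, min_eq_right (le_of_not_ge hzγ),
          CBEnv.JCB_coe k₁ k₂ K hz]
        exact EReal.coe_le_coe_iff.2 (CBEnv.LJr_min hA0 hB0 hγ hrel hz)
  -- maximality
  have part5 : ∀ h : ℝ → EReal, ERealConvexOn h → LowerSemicontinuous h →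
      (∀ z : ℝ, h z ≤ JCB k₁ k₂ K z) → ∀ z : ℝ, h z ≤ gCB k₁ k₂ K z := by
    intro h hconv hlsc hle z
    by_cases hz : z ≤ 0
    · rw [CBEnv.gCB_top hz]; exact le_top
    push_neg at hz
    by_cases hzγ : z ≤ γ
    · rw [CBEnv.gCB_mid hz hzγ]; exact hle z
    push_neg at hzγ
    rw [CBEnv.gCB_pos hz hγ, min_eq_right hzγ.le]
    -- combination lemma
    have hcomb : ∀ w : ℝ, z < w →
        h z ≤ ((w - z)/(w - γ) : ℝ) * h γ + ((z - γ)/(w - γ) : ℝ) * h w := by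
      intro w hw
      have hwγ : γ < w := hzγ.trans hw
      have hd : (0:ℝ) < w - γ := by linarith
      have hp : (0:ℝ) ≤ (w - z)/(w - γ) := by
        apply div_nonneg (by linarith) hd.le
      have hq : (0:ℝ) ≤ (z - γ)/(w - γ) := by
        apply div_nonneg (by linarith) hd.le
      have hpq : (w - z)/(w - γ) + (z - γ)/(w - γ) = 1 := by
        field_simp
        ring
      have heq : (w - z)/(w - γ) * γ + (z - γ)/(w - γ) * w = z := by
        field_simp
        ring
      have := hconv γ w _ _ hp hq hpq
      rwa [heq] at this
    by_cases hbγ : h γ = ⊥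
    · have hz1 : z < z + 1 := by linarith
      have := hcomb (z + 1) hz1
      rw [hbγ, EReal.mul_bot_of_pos, EReal.bot_add] at this
      · exact le_bot_iff.1 this |>.le.trans bot_le
      · apply EReal.coe_pos.2
        apply div_pos (by linarith) (by linarith [hzγ])
    by_cases hbw : ∃ w : ℝ, z < w ∧ h w = ⊥
    · obtain ⟨w, hw, hwbot⟩ := hbw
      have := hcomb w hw
      rw [hwbot, EReal.mul_bot_of_pos, EReal.add_bot] at this
      · exact le_bot_iff.1 this |>.le.trans bot_le
      · apply EReal.coe_pos.2
        apply div_pos (by linarith [hzγ]) (by linarith [hzγ])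
    push_neg at hbw
    -- h γ and h w are real
    have hγtop : h γ ≠ ⊤ := by
      apply ne_top_of_le_ne_top _ (hle γ)
      rw [CBEnv.JCB_coe k₁ k₂ K hγ]
      exact EReal.coe_ne_top _
    obtain ⟨r0, hr0⟩ : ∃ r0 : ℝ, h γ = (r0 : EReal) :=
      ⟨(h γ).toReal, (EReal.coe_toReal hγtop hbγ).symm⟩
    have hr0le : r0 ≤ LJr A B γ := by
      have := hle γ
      rw [CBEnv.JCB_coe k₁ k₂ K hγ, hr0] at this
      exact EReal.coe_le_coe_iff.1 this
    -- the eventual bound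
    have hev : ∀ᶠ w in Filter.atTop,
        h z ≤ (((w - z)/(w - γ) * LJr A B γ + (z - γ)/(w - γ) * LJr A B w : ℝ) : EReal) := by
      filter_upwards [eventually_gt_atTop z] with w hw
      have hwγ : γ < w := hzγ.trans hw
      have hw0 : (0:ℝ) < w := hγ.trans hwγ
      have hd : (0:ℝ) < w - γ := by linarith
      have hwtop : h w ≠ ⊤ := by
        apply ne_top_of_le_ne_top _ (hle w)
        rw [CBEnv.JCB_coe k₁ k₂ K hw0]
        exact EReal.coe_ne_top _
      have hwbot : h w ≠ ⊥ := hbw w hw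
      obtain ⟨rw', hrw⟩ : ∃ rw' : ℝ, h w = (rw' : EReal) :=
        ⟨(h w).toReal, (EReal.coe_toReal hwtop hwbot).symm⟩
      have hrwle : rw' ≤ LJr A B w := by
        have := hle w
        rw [CBEnv.JCB_coe k₁ k₂ K hw0, hrw] at this
        exact EReal.coe_le_coe_iff.1 this
      have h1 := hcomb w hw
      rw [hr0, hrw, ← EReal.coe_mul, ← EReal.coe_mul, ← EReal.coe_add] at h1
      apply h1.trans
      apply EReal.coe_le_coe_iff.2
      have hp : (0:ℝ) ≤ (w - z)/(w - γ) := div_nonneg (by linarith) hd.le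
      have hq : (0:ℝ) ≤ (z - γ)/(w - γ) := div_nonneg (by linarith [hzγ]) hd.le
      exact add_le_add (mul_le_mul_of_nonneg_left hr0le hp)
        (mul_le_mul_of_nonneg_left hrwle hq)
    -- the limit
    have htt : Filter.Tendsto
        (fun w : ℝ => (((w - z)/(w - γ) * LJr A B γ + (z - γ)/(w - γ) * LJr A B w : ℝ) : EReal))
        Filter.atTop (nhds ((LJr A B γ : ℝ) : EReal)) := by
      apply (continuous_coe_real_ereal.tendsto _).comp
      have hwγtend : Filter.Tendsto (fun w : ℝ => w - γ) Filter.atTop Filter.atTop :=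
        Filter.tendsto_atTop_add_const_right _ _ Filter.tendsto_id
      have t2 : Filter.Tendsto (fun w : ℝ => (z - γ)/(w - γ)) Filter.atTop (nhds 0) :=
        Filter.Tendsto.div_atTop tendsto_const_nhds hwγtend
      have t1 : Filter.Tendsto (fun w : ℝ => (w - z)/(w - γ)) Filter.atTop (nhds 1) := by
        have : Filter.Tendsto (fun w : ℝ => 1 - (z - γ)/(w - γ)) Filter.atTop (nhds 1) := by
          have := tendsto_const_nhds.sub t2 (f := fun _ : ℝ => (1:ℝ))
          norm_num at this
          exact this
        apply this.congr'
        filter_upwards [eventually_gt_atTop γ] with w hw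
        have : w - γ ≠ 0 := by linarith
        field_simp
        ring
      have tF : Filter.Tendsto (fun w : ℝ => LJr A B w) Filter.atTop (nhds 0) :=
        CBEnv.tendsto_LJr_zero A B
      have := (t1.mul (tendsto_const_nhds (x := LJr A B γ))).add (t2.mul tF)
      norm_num at this
      exact this
    exact ge_of_tendsto htt hev
  exact ⟨part1, part2, part3, part4, part5⟩
end
end

section
/- Let k₁,k₂>0, K≥2, J(z)=k₁/z¹²−k₂/z⁶ for z>0 and +∞ for z≤0, J_j(z):=J(jz), γ:=(2k₁/k₂)^{1/6}·((Σ_{j=1}^K j^{-12})/(Σ_{j=1}^K j^{-6}))^{1/6}, c_j:=−jJ'(jγ)/J'(γ), and ψ_j(z):=J_j(z)+c_j J_1(z) (j=2,…,K). Then for every j=2,…,K there exist η₁>0 and C₁>0 such that for all z_1,…,z_j∈ℝ with Σ_{s=1}^j |z_s−γ| ≤ η₁, one has (in ℝ∪{+∞}): J_j((1/j)·Σ_{s=1}^j z_s) + (c_j/j)·Σ_{s=1}^j J_1(z_s) − ψ_j(γ) ≥ C₁·Σ_{s=1}^j (z_s−γ)². -/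
open Filter Finset Set

noncomputable section

/-- `ψ_j(γ) = J_j(γ) + c_j·J_1(γ)` (a real number). -/
def psiGamma (k₁ k₂ : ℝ) (K j : ℕ) : ℝ :=
  LJr k₁ k₂ ((j : ℝ) * gammaLJ k₁ k₂ K) + cLJ k₁ k₂ K j * LJr k₁ k₂ (gammaLJ k₁ k₂ K)

set_option maxHeartbeats 1000000

namespace QBC

def D1 (k₁ k₂ z : ℝ) : ℝ := -12 * k₁ / z ^ 13 + 6 * k₂ / z ^ 7
def D2 (k₁ k₂ z : ℝ) : ℝ := 156 * k₁ / z ^ 14 - 42 * k₂ / z ^ 8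

lemma hasDerivAt_LJr (k₁ k₂ : ℝ) {z : ℝ} (hz : z ≠ 0) :
    HasDerivAt (LJr k₁ k₂) (D1 k₁ k₂ z) z := by
  have h1 : HasDerivAt (fun z : ℝ => k₁ / z ^ 12)
      ((0 * z ^ 12 - k₁ * (12 * z ^ 11)) / (z ^ 12) ^ 2) z :=
    (hasDerivAt_const z k₁).div (hasDerivAt_pow 12 z) (pow_ne_zero _ hz)
  have h2 : HasDerivAt (fun z : ℝ => k₂ / z ^ 6)
      ((0 * z ^ 6 - k₂ * (6 * z ^ 5)) / (z ^ 6) ^ 2) z :=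
    (hasDerivAt_const z k₂).div (hasDerivAt_pow 6 z) (pow_ne_zero _ hz)
  have h := h1.sub h2
  refine h.congr_deriv ?_
  unfold D1
  field_simp
  ring

lemma hasDerivAt_D1 (k₁ k₂ : ℝ) {z : ℝ} (hz : z ≠ 0) :
    HasDerivAt (D1 k₁ k₂) (D2 k₁ k₂ z) z := by
  have h1 : HasDerivAt (fun z : ℝ => -12 * k₁ / z ^ 13)
      ((0 * z ^ 13 - -12 * k₁ * (13 * z ^ 12)) / (z ^ 13) ^ 2) z :=
    (hasDerivAt_const z (-12 * k₁)).div (hasDerivAt_pow 13 z) (pow_ne_zero _ hz)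
  have h2 : HasDerivAt (fun z : ℝ => 6 * k₂ / z ^ 7)
      ((0 * z ^ 7 - 6 * k₂ * (7 * z ^ 6)) / (z ^ 7) ^ 2) z :=
    (hasDerivAt_const z (6 * k₂)).div (hasDerivAt_pow 7 z) (pow_ne_zero _ hz)
  have h := h1.add h2
  refine h.congr_deriv ?_
  unfold D2
  field_simp
  ring

/-- quadratic lower bound from a second-derivative bound on an interval -/
lemma quad_lb {f f' f'' : ℝ → ℝ} {A B b C : ℝ} (hb : b ∈ Icc A B)
    (hd1 : ∀ x ∈ Icc A B, HasDerivAt f (f' x) x)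
    (hd2 : ∀ x ∈ Icc A B, HasDerivAt f' (f'' x) x)
    (hC : ∀ x ∈ Icc A B, 2 * C ≤ f'' x) :
    ∀ x ∈ Icc A B, f b + f' b * (x - b) + C * (x - b) ^ 2 ≤ f x := by
  set G : ℝ → ℝ := fun x => f x - f' b * x - C * (x - b) ^ 2 with hGdef
  set G' : ℝ → ℝ := fun x => f' x - f' b - 2 * C * (x - b) with hG'def
  have hdG : ∀ x ∈ Icc A B, HasDerivAt G (G' x) x := by
    intro x hx
    have h := ((hd1 x hx).sub ((hasDerivAt_id x).const_mul (f' b))).sub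
      ((((hasDerivAt_id x).sub_const b).pow 2).const_mul C)
    refine h.congr_deriv ?_
    simp [hG'def]
    ring
  have hdG' : ∀ x ∈ Icc A B, HasDerivAt G' (f'' x - 2 * C) x := by
    intro x hx
    have h := ((hd2 x hx).sub_const (f' b)).sub
      (((hasDerivAt_id x).sub_const b).const_mul (2 * C))
    refine h.congr_deriv ?_
    simp
  have hmono : MonotoneOn G' (Icc A B) := by
    apply monotoneOn_of_deriv_nonneg (convex_Icc A B)
    · exact fun x hx => (hdG' x hx).continuousAt.continuousWithinAt
    · exact fun x hx =>
        (hdG' x (interior_subset hx)).differentiableAt.differentiableWithinAt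
    · intro x hx
      rw [(hdG' x (interior_subset hx)).deriv]
      linarith [hC x (interior_subset hx)]
  have hG'b : G' b = 0 := by simp [hG'def]
  intro x hx
  have key : G b ≤ G x := by
    rcases le_total b x with h | h
    · have hsub : Icc b x ⊆ Icc A B := Icc_subset_Icc hb.1 hx.2
      have hmono2 : MonotoneOn G (Icc b x) := by
        apply monotoneOn_of_deriv_nonneg (convex_Icc b x)
        · exact fun y hy => (hdG y (hsub hy)).continuousAt.continuousWithinAt
        · exact fun y hy =>
            (hdG y (hsub (interior_subset hy))).differentiableAt.differentiableWithinAt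
        · intro y hy
          have hyI := hsub (interior_subset hy)
          rw [(hdG y hyI).deriv]
          have := hmono hb hyI (interior_subset hy).1
          rw [hG'b] at this
          exact this
      exact hmono2 ⟨le_refl b, h⟩ ⟨h, le_refl x⟩ h
    · have hsub : Icc x b ⊆ Icc A B := Icc_subset_Icc hx.1 hb.2
      have hanti : AntitoneOn G (Icc x b) := by
        apply antitoneOn_of_deriv_nonpos (convex_Icc x b)
        · exact fun y hy => (hdG y (hsub hy)).continuousAt.continuousWithinAt
        · exact fun y hy =>
            (hdG y (hsub (interior_subset hy))).differentiableAt.differentiableWithinAt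
        · intro y hy
          have hyI := hsub (interior_subset hy)
          rw [(hdG y hyI).deriv]
          have := hmono hyI hb (interior_subset hy).2
          rw [hG'b] at this
          exact this
      exact hanti ⟨le_refl x, h⟩ ⟨h, le_refl b⟩ h
  simp only [hGdef] at key
  nlinarith [key]

lemma S6_le : ∀ K : ℕ, 1 ≤ K → (∑ j ∈ Finset.Icc 1 K, 1 / (j : ℝ) ^ 6) ≤ 2 - 1 / (K:ℝ) := by
  intro K
  induction K with
  | zero => omega
  | succ n ih =>
    intro _
    rcases Nat.eq_zero_or_pos n with hn | hn
    · subst hn; norm_num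
    · rw [Finset.sum_Icc_succ_top (by omega)]
      have h1 : (1 : ℝ) ≤ n := by exact_mod_cast hn
      have hn1 : (0:ℝ) < (n:ℝ) := by linarith
      have hnn : (0:ℝ) < (n:ℝ) + 1 := by linarith
      have hA : (1 : ℝ) / ((n:ℝ) + 1) ^ 6 ≤ 1 / ((n:ℝ) * ((n:ℝ) + 1)) := by
        apply one_div_le_one_div_of_le (by positivity)
        have h4 : (1:ℝ) ≤ ((n:ℝ)+1)^4 := by
          calc (1:ℝ) = 1^4 := by norm_num
          _ ≤ ((n:ℝ)+1)^4 := pow_le_pow_left₀ (by norm_num) (by linarith) 4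
        have h5 : ((n:ℝ)+1)^2 ≤ ((n:ℝ)+1)^6 := by nlinarith [h4, sq_nonneg ((n:ℝ)+1)]
        nlinarith [h5]
      have hB : (1 : ℝ) / ((n:ℝ) * ((n:ℝ) + 1)) = 1 / (n:ℝ) - 1 / ((n:ℝ)+1) := by
        field_simp
        ring
      have hih := ih hn
      push_cast
      linarith [hA, hB]

lemma coe_sum_ereal {α : Type*} (s : Finset α) (f : α → ℝ) :
    ((∑ i ∈ s, f i : ℝ) : EReal) = ∑ i ∈ s, ((f i : ℝ) : EReal) :=
  map_sum (⟨⟨Real.toEReal, EReal.coe_zero⟩, EReal.coe_add⟩ : ℝ →+ EReal) f s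

end QBC

/-- Lemma 4.1 of the paper: for every `j = 2,…,K` there exist `η₁ > 0`
and `C₁ > 0` such that whenever `Σ_{s=1}^j |z_s - γ| ≤ η₁`, one has (in `ℝ ∪ {+∞}`)
`J_j((1/j)Σ z_s) + (c_j/j)·Σ J_1(z_s) - ψ_j(γ) ≥ C₁·Σ (z_s - γ)²`. -/
theorem quadratic_bound_cell_lemma (k₁ k₂ : ℝ) (hk₁ : 0 < k₁) (hk₂ : 0 < k₂)
    (K : ℕ) (hK : 2 ≤ K) :
    ∀ j ∈ Finset.Icc 2 K, ∃ η₁ > (0 : ℝ), ∃ C₁ > (0 : ℝ),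
      ∀ p : Fin j → ℝ, (∑ s, |p s - gammaLJ k₁ k₂ K|) ≤ η₁ →
        ((C₁ * ∑ s, (p s - gammaLJ k₁ k₂ K) ^ 2 : ℝ) : EReal) ≤
          LJ k₁ k₂ ((j : ℝ) * ((∑ s, p s) / j)) +
            ((cLJ k₁ k₂ K j / j : ℝ) : EReal) * (∑ s, LJ k₁ k₂ (p s)) -
            ((psiGamma k₁ k₂ K j : ℝ) : EReal) := by
  intro j hj
  obtain ⟨hj2, hjK⟩ := Finset.mem_Icc.mp hj
  set g : ℝ := gammaLJ k₁ k₂ K with hgdef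
  set S12 : ℝ := ∑ i ∈ Finset.Icc 1 K, 1 / (i : ℝ) ^ 12 with hS12def
  set S6 : ℝ := ∑ i ∈ Finset.Icc 1 K, 1 / (i : ℝ) ^ 6 with hS6def
  set ρ : ℝ := S12 / S6 with hρdef
  clear_value g S12 S6
  have hρ' : ρ = S12 / S6 := hρdef
  clear_value ρ
  have h1K : (1 : ℕ) ∈ Finset.Icc 1 K := Finset.mem_Icc.mpr ⟨le_refl 1, by omega⟩
  have h2K : (2 : ℕ) ∈ Finset.Icc 1 K := Finset.mem_Icc.mpr ⟨by omega, hK⟩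
  have hS12ge1 : (1 : ℝ) ≤ S12 := by
    rw [hS12def]
    refine le_trans (by norm_num) (Finset.single_le_sum (f := fun i : ℕ => 1 / (i : ℝ) ^ 12)
      (fun i _ => by positivity) h1K)
  have hS12pos : 0 < S12 := lt_of_lt_of_le one_pos hS12ge1
  have hS6ge1 : (1 : ℝ) ≤ S6 := by
    rw [hS6def]
    refine le_trans (by norm_num) (Finset.single_le_sum (f := fun i : ℕ => 1 / (i : ℝ) ^ 6)
      (fun i _ => by positivity) h1K)
  have hS6pos : 0 < S6 := lt_of_lt_of_le one_pos hS6ge1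
  have hS6le2 : S6 ≤ 2 := by
    have h := QBC.S6_le K (by omega)
    have : (0:ℝ) < (K:ℝ) := by positivity
    have : (0:ℝ) ≤ 1 / (K:ℝ) := by positivity
    rw [hS6def]; linarith
  have hS12ltS6 : S12 < S6 := by
    rw [hS12def, hS6def]
    apply Finset.sum_lt_sum
    · intro i hi
      have hi1 : 1 ≤ i := (Finset.mem_Icc.mp hi).1
      have h1i : (1:ℝ) ≤ (i:ℝ) := by exact_mod_cast hi1
      have h6 : (1:ℝ) ≤ (i:ℝ)^6 := by
        calc (1:ℝ) = 1^6 := by norm_num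
        _ ≤ (i:ℝ)^6 := pow_le_pow_left₀ (by norm_num) h1i 6
      have hip : (0:ℝ) < (i:ℝ)^6 := by positivity
      apply one_div_le_one_div_of_le hip
      calc (i:ℝ)^6 = (i:ℝ)^6 * 1 := by ring
      _ ≤ (i:ℝ)^6 * (i:ℝ)^6 := by nlinarith
      _ = (i:ℝ)^12 := by ring
    · exact ⟨2, h2K, by norm_num⟩
  have hρpos : 0 < ρ := hρ' ▸ div_pos hS12pos hS6pos
  have hρlt1 : ρ < 1 := hρ' ▸ (div_lt_one hS6pos).mpr hS12ltS6
  have hρhalf : 1 / 2 ≤ ρ := by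
    rw [hρ', le_div_iff₀ hS6pos]; linarith
  -- γ > 0 and γ^6 = (2k₁/k₂)·ρ
  have hQpos : (0:ℝ) < 2 * k₁ / k₂ := by positivity
  have hgpos : 0 < g := by
    rw [hgdef, gammaLJ, ← hS12def, ← hS6def, ← hρ']
    exact mul_pos (Real.rpow_pos_of_pos hQpos _) (Real.rpow_pos_of_pos hρpos _)
  have hg0 : g ≠ 0 := ne_of_gt hgpos
  have hg6 : g ^ 6 = (2 * k₁ / k₂) * ρ := by
    rw [hgdef, gammaLJ, ← hS12def, ← hS6def, ← hρ', mul_pow,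
      ← Real.rpow_natCast ((2*k₁/k₂) ^ ((1:ℝ)/6)) 6,
      ← Real.rpow_natCast (ρ ^ ((1:ℝ)/6)) 6,
      ← Real.rpow_mul hQpos.le, ← Real.rpow_mul hρpos.le]
    norm_num
  have hk2g6 : k₂ * g ^ 6 = 2 * k₁ * ρ := by
    rw [hg6]; field_simp
  have hk₂eq : k₂ = 2 * k₁ * ρ / g ^ 6 := by
    field_simp at hk2g6 ⊢; linarith [hk2g6]
  -- basic facts about j
  have hjR : (2:ℝ) ≤ (j:ℝ) := by exact_mod_cast hj2
  have hjpos : (0:ℝ) < (j:ℝ) := by linarith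
  have hj0 : (j:ℝ) ≠ 0 := ne_of_gt hjpos
  have hjgpos : 0 < (j:ℝ) * g := mul_pos hjpos hgpos
  have hjg0 : (j:ℝ) * g ≠ 0 := ne_of_gt hjgpos
  have hj6 : (64:ℝ) ≤ (j:ℝ)^6 := by
    calc (64:ℝ) = 2^6 := by norm_num
    _ ≤ (j:ℝ)^6 := pow_le_pow_left₀ (by norm_num) hjR 6
  have hj6ρ : 1 < (j:ℝ)^6 * ρ := by nlinarith
  -- derivative values and signs
  have hD1g : QBC.D1 k₁ k₂ g = 12 * k₁ * (ρ - 1) / g ^ 13 := by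
    rw [QBC.D1, hk₂eq]; field_simp; ring
  have hD1gneg : QBC.D1 k₁ k₂ g < 0 := by
    rw [hD1g]
    apply div_neg_of_neg_of_pos _ (by positivity)
    nlinarith
  have hD1g0 : QBC.D1 k₁ k₂ g ≠ 0 := ne_of_lt hD1gneg
  have hD1jg : QBC.D1 k₁ k₂ ((j:ℝ) * g) = 12 * k₁ * ((j:ℝ)^6 * ρ - 1) / ((j:ℝ) * g) ^ 13 := by
    rw [QBC.D1, hk₂eq]; field_simp; ring
  have hD1jgpos : 0 < QBC.D1 k₁ k₂ ((j:ℝ) * g) := by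
    rw [hD1jg]
    apply div_pos _ (by positivity)
    nlinarith
  have hD2g : QBC.D2 k₁ k₂ g = 12 * k₁ * (13 - 7 * ρ) / g ^ 14 := by
    rw [QBC.D2, hk₂eq]; field_simp; ring
  have hD2gpos : 0 < QBC.D2 k₁ k₂ g := by
    rw [hD2g]
    apply div_pos _ (by positivity)
    nlinarith
  -- deriv of LJr equals D1
  have hderiv : ∀ x : ℝ, x ≠ 0 → deriv (LJr k₁ k₂) x = QBC.D1 k₁ k₂ x :=
    fun x hx => (QBC.hasDerivAt_LJr k₁ k₂ hx).deriv
  set c : ℝ := cLJ k₁ k₂ K j with hcdef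
  clear_value c
  have hc : c = (j:ℝ) * QBC.D1 k₁ k₂ ((j:ℝ) * g) / (-(QBC.D1 k₁ k₂ g)) := by
    rw [hcdef, cLJ]
    simp only [← hgdef]
    rw [hderiv _ hjg0, hderiv _ hg0, neg_div, div_neg]
  have hcpos : 0 < c := by
    rw [hc]
    exact div_pos (mul_pos hjpos hD1jgpos) (by linarith)
  -- second derivative of ψ at γ is positive
  set ψpp : ℝ := (j:ℝ)^2 * QBC.D2 k₁ k₂ ((j:ℝ) * g) + c * QBC.D2 k₁ k₂ g with hψppdef
  clear_value ψpp
  have hD2jg : QBC.D2 k₁ k₂ ((j:ℝ) * g)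
      = 12 * k₁ * (13 - 7 * ((j:ℝ)^6 * ρ)) / ((j:ℝ) * g) ^ 14 := by
    rw [QBC.D2, hk₂eq]; field_simp; ring
  have hψpppos : 0 < ψpp := by
    have hstep : ψpp * (-(QBC.D1 k₁ k₂ g)) =
        (j:ℝ)^2 * QBC.D2 k₁ k₂ ((j:ℝ)*g) * (-(QBC.D1 k₁ k₂ g))
          + (j:ℝ) * QBC.D1 k₁ k₂ ((j:ℝ)*g) * QBC.D2 k₁ k₂ g := by
      rw [hψppdef, hc]
      field_simp [hD1g0]
      ring
    have hmul : ψpp * (-(QBC.D1 k₁ k₂ g)) =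
        864 * k₁^2 * ρ * ((j:ℝ)^6 - 1) / ((j:ℝ)^12 * g^27) := by
      rw [hstep, hD1g, hD1jg, hD2g, hD2jg]
      field_simp
      ring
    have hNpos : 0 < 864 * k₁^2 * ρ * ((j:ℝ)^6 - 1) / ((j:ℝ)^12 * g^27) := by
      apply div_pos _ (by positivity)
      exact mul_pos (mul_pos (by positivity) hρpos) (by nlinarith)
    rw [← hmul] at hNpos
    rcases mul_pos_iff.mp hNpos with ⟨h, _⟩ | ⟨_, h⟩
    · exact h
    · linarith
  -- choose η by continuity
  have hcontD2 : ContinuousAt (fun x => QBC.D2 k₁ k₂ x) g := by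
    apply ContinuousAt.sub
    · exact ContinuousAt.div continuousAt_const ((continuous_pow 14).continuousAt)
        (by positivity)
    · exact ContinuousAt.div continuousAt_const ((continuous_pow 8).continuousAt)
        (by positivity)
  have hcontD2j : ContinuousAt (fun x => QBC.D2 k₁ k₂ ((j:ℝ) * x)) g := by
    apply ContinuousAt.sub
    · exact ContinuousAt.div continuousAt_const
        (((continuous_const.mul continuous_id).pow 14).continuousAt) (by positivity)
    · exact ContinuousAt.div continuousAt_const
        (((continuous_const.mul continuous_id).pow 8).continuousAt) (by positivity)
  have hcontΦ : ContinuousAt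
      (fun x => (j:ℝ)^2 * QBC.D2 k₁ k₂ ((j:ℝ) * x) + c * QBC.D2 k₁ k₂ x) g :=
    (hcontD2j.const_mul _).add (hcontD2.const_mul _)
  have e1 : ∀ᶠ x in nhds g, 0 < x := eventually_gt_nhds hgpos
  have e2 : ∀ᶠ x in nhds g, QBC.D2 k₁ k₂ g / 2 < QBC.D2 k₁ k₂ x :=
    hcontD2.eventually (eventually_gt_nhds (by linarith))
  have e3 : ∀ᶠ x in nhds g,
      ψpp / 2 < (j:ℝ)^2 * QBC.D2 k₁ k₂ ((j:ℝ) * x) + c * QBC.D2 k₁ k₂ x :=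
    hcontΦ.eventually (eventually_gt_nhds (by linarith))
  have e := (e1.and e2).and e3
  rw [Metric.eventually_nhds_iff] at e
  obtain ⟨ε, hεpos, hball⟩ := e
  set η : ℝ := ε / 2 with hηdef
  have hηpos : 0 < η := by positivity
  have hIball : ∀ x ∈ Icc (g - η) (g + η), (0 < x ∧ QBC.D2 k₁ k₂ g / 2 < QBC.D2 k₁ k₂ x)
      ∧ ψpp / 2 < (j:ℝ)^2 * QBC.D2 k₁ k₂ ((j:ℝ) * x) + c * QBC.D2 k₁ k₂ x := by
    intro x hx
    apply hball
    rw [Real.dist_eq, abs_sub_lt_iff]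
    constructor <;> [linarith [hx.2]; linarith [hx.1]]
  set CJ : ℝ := QBC.D2 k₁ k₂ g / 4 with hCJdef
  have hCJpos : 0 < CJ := by rw [hCJdef]; linarith
  set Cψ : ℝ := ψpp / 4 with hCψdef
  have hCψpos : 0 < Cψ := by rw [hCψdef]; linarith
  set C₁ : ℝ := min (Cψ / j) (c * CJ / j) with hC₁def
  have hC₁pos : 0 < C₁ := lt_min (by positivity) (by positivity)
  refine ⟨η, hηpos, C₁, hC₁pos, ?_⟩
  intro p hp
  -- the points and their mean lie in the interval
  have hpI : ∀ s : Fin j, p s ∈ Icc (g - η) (g + η) := by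
    intro s
    have h1 : |p s - g| ≤ η :=
      le_trans (Finset.single_le_sum (f := fun s => |p s - g|)
        (fun i _ => abs_nonneg _) (Finset.mem_univ s)) hp
    have h2 := abs_le.mp h1
    exact ⟨by linarith [h2.1], by linarith [h2.2]⟩
  set m : ℝ := (∑ s, p s) / j with hmdef
  have hsum_sub : ∑ s, (p s - g) = (∑ s, p s) - (j:ℝ) * g := by
    rw [Finset.sum_sub_distrib, Finset.sum_const, Finset.card_univ, Fintype.card_fin,
      nsmul_eq_mul]
  have hmg : m - g = (∑ s, (p s - g)) / j := by
    rw [hsum_sub, hmdef]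
    field_simp
  have hmI : m ∈ Icc (g - η) (g + η) := by
    have h1 : |∑ s, (p s - g)| ≤ η := le_trans (Finset.abs_sum_le_sum_abs _ _) hp
    have habs : |m - g| ≤ η := by
      rw [hmg, abs_div, abs_of_pos hjpos]
      have hle : |∑ s, (p s - g)| / (j:ℝ) ≤ η / (j:ℝ) := by gcongr
      have hη2 : η / (j:ℝ) ≤ η := div_le_self hηpos.le (by linarith)
      linarith
    have h2 := abs_le.mp habs
    exact ⟨by linarith [h2.1], by linarith [h2.2]⟩
  have hIpos : ∀ x ∈ Icc (g - η) (g + η), (0:ℝ) < x := fun x hx => ((hIball x hx).1).1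
  have hppos : ∀ s : Fin j, 0 < p s := fun s => hIpos _ (hpI s)
  have hmpos : 0 < m := hIpos _ hmI
  have hjm : (j:ℝ) * m = ∑ s, p s := by
    rw [hmdef]; field_simp
  have hjmpos : 0 < (j:ℝ) * m := by positivity
  have hgI : g ∈ Icc (g - η) (g + η) := ⟨by linarith, by linarith⟩
  have hzero : ∑ s, (p s - m) = 0 := by
    rw [Finset.sum_sub_distrib, Finset.sum_const, Finset.card_univ, Fintype.card_fin,
      nsmul_eq_mul, hjm, sub_self]
  -- strong convexity of LJr on the interval, based at m
  have hLJconv : ∀ x ∈ Icc (g - η) (g + η),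
      LJr k₁ k₂ m + QBC.D1 k₁ k₂ m * (x - m) + CJ * (x - m) ^ 2 ≤ LJr k₁ k₂ x := by
    apply QBC.quad_lb hmI
      (fun x hx => QBC.hasDerivAt_LJr k₁ k₂ (ne_of_gt (hIpos x hx)))
      (fun x hx => QBC.hasDerivAt_D1 k₁ k₂ (ne_of_gt (hIpos x hx)))
    intro x hx
    have h := ((hIball x hx).1).2
    rw [hCJdef]
    linarith
  have h2 : (j:ℝ) * LJr k₁ k₂ m + CJ * ∑ s, (p s - m) ^ 2 ≤ ∑ s, LJr k₁ k₂ (p s) := by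
    have hsumle := Finset.sum_le_sum (fun s (_ : s ∈ Finset.univ) => hLJconv _ (hpI s))
    have hexp : ∑ s, (LJr k₁ k₂ m + QBC.D1 k₁ k₂ m * (p s - m) + CJ * (p s - m) ^ 2)
        = (j:ℝ) * LJr k₁ k₂ m + QBC.D1 k₁ k₂ m * (∑ s, (p s - m))
          + CJ * ∑ s, (p s - m) ^ 2 := by
      rw [Finset.sum_add_distrib, Finset.sum_add_distrib, ← Finset.mul_sum, ← Finset.mul_sum,
        Finset.sum_const, Finset.card_univ, Fintype.card_fin, nsmul_eq_mul]
    rw [hexp, hzero, mul_zero, add_zero] at hsumle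
    exact hsumle
  -- quadratic growth of ψ at γ
  have hd1ψ : ∀ x ∈ Icc (g - η) (g + η),
      HasDerivAt (fun z => LJr k₁ k₂ ((j:ℝ) * z) + c * LJr k₁ k₂ z)
        ((j:ℝ) * QBC.D1 k₁ k₂ ((j:ℝ) * x) + c * QBC.D1 k₁ k₂ x) x := by
    intro x hx
    have hx0 := ne_of_gt (hIpos x hx)
    have hjx0 : (j:ℝ) * x ≠ 0 := mul_ne_zero hj0 hx0
    have hcomp : HasDerivAt (fun z : ℝ => LJr k₁ k₂ ((j:ℝ) * z))
        (QBC.D1 k₁ k₂ ((j:ℝ) * x) * ((j:ℝ) * 1)) x :=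
      (QBC.hasDerivAt_LJr k₁ k₂ hjx0).comp x ((hasDerivAt_id x).const_mul (j:ℝ))
    have h := hcomp.add ((QBC.hasDerivAt_LJr k₁ k₂ hx0).const_mul c)
    refine h.congr_deriv ?_
    ring
  have hd2ψ : ∀ x ∈ Icc (g - η) (g + η),
      HasDerivAt (fun z => (j:ℝ) * QBC.D1 k₁ k₂ ((j:ℝ) * z) + c * QBC.D1 k₁ k₂ z)
        ((j:ℝ) ^ 2 * QBC.D2 k₁ k₂ ((j:ℝ) * x) + c * QBC.D2 k₁ k₂ x) x := by
    intro x hx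
    have hx0 := ne_of_gt (hIpos x hx)
    have hjx0 : (j:ℝ) * x ≠ 0 := mul_ne_zero hj0 hx0
    have hcomp : HasDerivAt (fun z : ℝ => QBC.D1 k₁ k₂ ((j:ℝ) * z))
        (QBC.D2 k₁ k₂ ((j:ℝ) * x) * ((j:ℝ) * 1)) x :=
      (QBC.hasDerivAt_D1 k₁ k₂ hjx0).comp x ((hasDerivAt_id x).const_mul (j:ℝ))
    have h := (hcomp.const_mul (j:ℝ)).add ((QBC.hasDerivAt_D1 k₁ k₂ hx0).const_mul c)
    refine h.congr_deriv ?_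
    ring
  have hψlb := QBC.quad_lb (C := Cψ) hgI hd1ψ hd2ψ
    (fun x hx => by
      have h := (hIball x hx).2
      rw [hCψdef]
      linarith)
  have hf'g0 : (j:ℝ) * QBC.D1 k₁ k₂ ((j:ℝ) * g) + c * QBC.D1 k₁ k₂ g = 0 := by
    have hne : -QBC.D1 k₁ k₂ g ≠ 0 := neg_ne_zero.mpr hD1g0
    rw [hc]
    field_simp
    ring
  have h1 := hψlb m hmI
  rw [hf'g0, zero_mul, add_zero] at h1
  have hψγ : psiGamma k₁ k₂ K j = LJr k₁ k₂ ((j:ℝ) * g) + c * LJr k₁ k₂ g := by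
    rw [psiGamma, ← hgdef, ← hcdef]
  have hdecomp : ∑ s, (p s - g) ^ 2 = ∑ s, (p s - m) ^ 2 + (j:ℝ) * (m - g) ^ 2 := by
    have hterm : ∀ s ∈ Finset.univ, (p s - g) ^ 2
        = (p s - m) ^ 2 + 2 * (m - g) * (p s - m) + (m - g) ^ 2 := fun s _ => by ring
    rw [Finset.sum_congr rfl hterm, Finset.sum_add_distrib, Finset.sum_add_distrib,
      ← Finset.mul_sum, hzero, mul_zero, add_zero, Finset.sum_const, Finset.card_univ,
      Fintype.card_fin, nsmul_eq_mul]
  have hsumnn : (0:ℝ) ≤ ∑ s, (p s - m) ^ 2 := Finset.sum_nonneg fun s _ => sq_nonneg _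
  have hreal : C₁ * ∑ s, (p s - g) ^ 2 ≤
      LJr k₁ k₂ ((j:ℝ) * m) + (c / j) * (∑ s, LJr k₁ k₂ (p s)) - psiGamma k₁ k₂ K j := by
    have hA : C₁ * ∑ s, (p s - m) ^ 2 ≤ (c * CJ / j) * ∑ s, (p s - m) ^ 2 :=
      mul_le_mul_of_nonneg_right (min_le_right _ _) hsumnn
    have hBle : C₁ * (j:ℝ) ≤ Cψ := by
      have h := min_le_left (Cψ / (j:ℝ)) (c * CJ / j)
      have h' := mul_le_mul_of_nonneg_right h hjpos.le
      rwa [div_mul_cancel₀ _ hj0] at h'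
    have hB : C₁ * ((j:ℝ) * (m - g) ^ 2) ≤ Cψ * (m - g) ^ 2 := by
      have h := mul_le_mul_of_nonneg_right hBle (sq_nonneg (m - g))
      rw [← mul_assoc]
      exact h
    have h2' : c / (j:ℝ) * ((j:ℝ) * LJr k₁ k₂ m + CJ * ∑ s, (p s - m) ^ 2)
        ≤ c / (j:ℝ) * (∑ s, LJr k₁ k₂ (p s)) :=
      mul_le_mul_of_nonneg_left h2 (by positivity)
    have hexpand : c / (j:ℝ) * ((j:ℝ) * LJr k₁ k₂ m + CJ * ∑ s, (p s - m) ^ 2)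
        = c * LJr k₁ k₂ m + (c * CJ / j) * ∑ s, (p s - m) ^ 2 := by
      field_simp
    rw [hψγ, hdecomp, mul_add]
    rw [hexpand] at h2'
    linarith [h1, h2', hA, hB]
  -- pass to EReal
  have hLJjm : LJ k₁ k₂ ((j:ℝ) * m) = ((LJr k₁ k₂ ((j:ℝ) * m) : ℝ) : EReal) := by
    rw [LJ, if_pos hjmpos]; rfl
  have hLJp : ∀ s ∈ Finset.univ, LJ k₁ k₂ (p s) = ((LJr k₁ k₂ (p s) : ℝ) : EReal) :=
    fun s _ => by rw [LJ, if_pos (hppos s)]; rfl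
  rw [hLJjm, Finset.sum_congr rfl hLJp, ← QBC.coe_sum_ereal, ← EReal.coe_mul,
    ← EReal.coe_add, ← EReal.coe_sub]
  exact EReal.coe_le_coe_iff.mpr hreal
end
end
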